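/- arXiv:1809.03070 — 9 statements merged into one kernel-verified Lean document; each statement's English description precedes it below -/
import Mathlib

section
/- Suppose s₁, s₂, s₃, s₄ : I → ℝ are differentiable on the interval I and trace rectangles gracing γ. Then A is differentiable on I and A′(t) = Y(t) X′(t) − X(t) Y′(t) for every t ∈ I. -/
noncomputable section

/-- The planar cross product `det(u,v) = u₁v₂ − u₂v₁`. -/
def pdet (u v : EuclideanSpace ℝ (Fin 2)) : ℝ := u 0 * v 1 - u 1 * v 0

private lemma hdw_congr {f : ℝ → ℝ} {a b : ℝ} {s : Set ℝ} {x : ℝ}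
    (h : HasDerivWithinAt f a s x) (hab : a = b) : HasDerivWithinAt f b s x := hab ▸ h

private lemma div_aux (X Y a b : ℝ) (hX : X ≠ 0) (hY : Y ≠ 0) :
    Y * (a / X) - X * (b / Y) = (Y ^ 2 * a - X ^ 2 * b) / (X * Y) := by
  field_simp

/-- If `s₁,…,s₄` are differentiable on the interval `I` and trace rectangles
gracing `γ`, then `A` is differentiable on `I` with `A′ = Y X′ − X Y′`. -/
theorem stmt2
    (γ : ℝ → EuclideanSpace ℝ (Fin 2)) (hγ : ContDiff ℝ 1 γ)
    (hper : ∀ s : ℝ, γ (s + 1) = γ s)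
    (s₁ s₂ s₃ s₄ : ℝ → ℝ)
    (I : Set ℝ) (hI : I.OrdConnected)
    (hs₁ : ∀ t ∈ I, DifferentiableWithinAt ℝ s₁ I t)
    (hs₂ : ∀ t ∈ I, DifferentiableWithinAt ℝ s₂ I t)
    (hs₃ : ∀ t ∈ I, DifferentiableWithinAt ℝ s₃ I t)
    (hs₄ : ∀ t ∈ I, DifferentiableWithinAt ℝ s₄ I t)
    (hpar : ∀ t ∈ I, γ (s₁ t) + γ (s₃ t) = γ (s₂ t) + γ (s₄ t))
    (hperp : ∀ t ∈ I, inner ℝ (γ (s₂ t) - γ (s₁ t)) (γ (s₄ t) - γ (s₁ t)) = (0 : ℝ))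
    (hccw : ∀ t ∈ I, pdet (γ (s₂ t) - γ (s₁ t)) (γ (s₄ t) - γ (s₁ t)) > 0)
    (X Y : ℝ → ℝ)
    (hX : X = fun t => ‖γ (s₂ t) - γ (s₁ t)‖)
    (hY : Y = fun t => ‖γ (s₃ t) - γ (s₂ t)‖)
    (A₁ A₂ A₃ A₄ : ℝ → ℝ)
    (hA₁ : A₁ = fun t => (1/2) * (∫ s in (s₁ t)..(s₂ t), pdet (γ s) (deriv γ s))
        + (1/2) * pdet (γ (s₂ t)) (γ (s₁ t)))
    (hA₂ : A₂ = fun t => (1/2) * (∫ s in (s₂ t)..(s₃ t), pdet (γ s) (deriv γ s))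
        + (1/2) * pdet (γ (s₃ t)) (γ (s₂ t)))
    (hA₃ : A₃ = fun t => (1/2) * (∫ s in (s₃ t)..(s₄ t), pdet (γ s) (deriv γ s))
        + (1/2) * pdet (γ (s₄ t)) (γ (s₃ t)))
    (hA₄ : A₄ = fun t => (1/2) * (∫ s in (s₄ t)..(s₁ t + 1), pdet (γ s) (deriv γ s))
        + (1/2) * pdet (γ (s₁ t + 1)) (γ (s₄ t)))
    (A : ℝ → ℝ) (hA : A = fun t => (A₁ t + A₃ t) - (A₂ t + A₄ t))
:
    ∀ t ∈ I, HasDerivWithinAt A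
      (Y t * derivWithin X I t - X t * derivWithin Y I t) I t := by
  have hγd : Differentiable ℝ γ := hγ.differentiable one_ne_zero
  have hγ'c : Continuous (deriv γ) := hγ.continuous_deriv le_rfl
  have hproj : ∀ i : Fin 2, ∀ s : ℝ, HasDerivAt (fun s => γ s i) (deriv γ s i) s := by
    intro i s
    exact (EuclideanSpace.proj i).hasFDerivAt.comp_hasDerivAt s (hγd s).hasDerivAt
  have hfc : Continuous fun s => pdet (γ s) (deriv γ s) := by
    simp only [pdet]
    exact (((EuclideanSpace.proj (0 : Fin 2)).continuous.comp hγ.continuous).mul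
        ((EuclideanSpace.proj (1 : Fin 2)).continuous.comp hγ'c)).sub
      (((EuclideanSpace.proj (1 : Fin 2)).continuous.comp hγ.continuous).mul
        ((EuclideanSpace.proj (0 : Fin 2)).continuous.comp hγ'c))
  have hG : ∀ x : ℝ, HasDerivAt (fun y => ∫ s in (0:ℝ)..y, pdet (γ s) (deriv γ s))
      (pdet (γ x) (deriv γ x)) x := fun x =>
    intervalIntegral.integral_hasDerivAt_right (hfc.intervalIntegrable _ _)
      (hfc.stronglyMeasurableAtFilter _ _) hfc.continuousAt
  have hGsub : ∀ a b : ℝ, (∫ s in a..b, pdet (γ s) (deriv γ s))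
      = (∫ s in (0:ℝ)..b, pdet (γ s) (deriv γ s)) - ∫ s in (0:ℝ)..a, pdet (γ s) (deriv γ s) :=
    fun a b => (intervalIntegral.integral_interval_sub_left
      (hfc.intervalIntegrable _ _) (hfc.intervalIntegrable _ _)).symm
  have hperd : ∀ s : ℝ, deriv γ (s + 1) = deriv γ s := by
    intro s
    have h1 : HasDerivAt (fun u : ℝ => γ (u + 1)) ((1:ℝ) • deriv γ (s + 1)) s :=
      ((hγd (s+1)).hasDerivAt).scomp s ((hasDerivAt_id s).add_const 1)
    have h2 : (fun u : ℝ => γ (u + 1)) = γ := funext hper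
    rw [h2, one_smul] at h1
    exact h1.deriv.symm
  intro t ht
  by_cases hone : I ⊆ {t}
  · have hIeq : I = {t} := le_antisymm hone (Set.singleton_subset_iff.mpr ht)
    rw [hIeq]
    rw [hasDerivWithinAt_iff_tendsto_slope]
    have he : ({t} : Set ℝ) \ {t} = (∅ : Set ℝ) := by simp
    rw [he, nhdsWithin_empty]
    exact Filter.tendsto_bot
  · obtain ⟨w, hwI, hwt⟩ := Set.not_subset.mp hone
    have hwt' : w ≠ t := hwt
    have hU : UniqueDiffWithinAt ℝ I t := by
      rcases lt_or_gt_of_ne hwt' with h | h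
      · exact (uniqueDiffOn_Icc h t ⟨le_of_lt h, le_refl t⟩).mono (hI.out hwI ht)
      · exact (uniqueDiffOn_Icc h t ⟨le_refl t, le_of_lt h⟩).mono (hI.out ht hwI)
    -- derivatives of the parameters
    have hd₁ := (hs₁ t ht).hasDerivWithinAt
    have hd₂ := (hs₂ t ht).hasDerivWithinAt
    have hd₃ := (hs₃ t ht).hasDerivWithinAt
    have hd₄ := (hs₄ t ht).hasDerivWithinAt
    have hd₁' : HasDerivWithinAt (fun τ => s₁ τ + 1) (derivWithin s₁ I t) I t := hd₁.add_const 1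
    have hcoord : ∀ (u : ℝ → ℝ) (σ : ℝ) (i : Fin 2), HasDerivWithinAt u σ I t →
        HasDerivWithinAt (fun τ => γ (u τ) i) (deriv γ (u t) i * σ) I t :=
      fun u σ i hu => (hproj i (u t)).comp_hasDerivWithinAt t hu
    have h10 := hcoord s₁ _ 0 hd₁
    have h11 := hcoord s₁ _ 1 hd₁
    have h20 := hcoord s₂ _ 0 hd₂
    have h21 := hcoord s₂ _ 1 hd₂
    have h30 := hcoord s₃ _ 0 hd₃
    have h31 := hcoord s₃ _ 1 hd₃
    have h40 := hcoord s₄ _ 0 hd₄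
    have h41 := hcoord s₄ _ 1 hd₄
    have hg₁ := (hG (s₁ t)).comp_hasDerivWithinAt t hd₁
    have hg₂ := (hG (s₂ t)).comp_hasDerivWithinAt t hd₂
    have hg₃ := (hG (s₃ t)).comp_hasDerivWithinAt t hd₃
    have hg₄ := (hG (s₄ t)).comp_hasDerivWithinAt t hd₄
    have hg₅ : HasDerivWithinAt (fun τ => ∫ s in (0:ℝ)..(s₁ τ + 1), pdet (γ s) (deriv γ s))
        (pdet (γ (s₁ t)) (deriv γ (s₁ t)) * derivWithin s₁ I t) I t := by
      rw [← hper (s₁ t), ← hperd (s₁ t)]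
      exact (hG (s₁ t + 1)).comp_hasDerivWithinAt t hd₁'
    -- the pieces
    have hB₁ := (((hg₂.sub hg₁).const_mul ((1:ℝ)/2)).add
      (((h20.mul h11).sub (h21.mul h10)).const_mul ((1:ℝ)/2)))
    have hB₂ := (((hg₃.sub hg₂).const_mul ((1:ℝ)/2)).add
      (((h30.mul h21).sub (h31.mul h20)).const_mul ((1:ℝ)/2)))
    have hB₃ := (((hg₄.sub hg₃).const_mul ((1:ℝ)/2)).add
      (((h40.mul h31).sub (h41.mul h30)).const_mul ((1:ℝ)/2)))
    have hB₄ := (((hg₅.sub hg₄).const_mul ((1:ℝ)/2)).add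
      (((h10.mul h41).sub (h11.mul h40)).const_mul ((1:ℝ)/2)))
    have hΦ := (hB₁.add hB₃).sub (hB₂.add hB₄)
    have hfun : ∀ τ : ℝ, A τ =
        ((1:ℝ)/2 * ((∫ s in (0:ℝ)..(s₂ τ), pdet (γ s) (deriv γ s))
            - ∫ s in (0:ℝ)..(s₁ τ), pdet (γ s) (deriv γ s))
          + (1:ℝ)/2 * (γ (s₂ τ) 0 * γ (s₁ τ) 1 - γ (s₂ τ) 1 * γ (s₁ τ) 0)
         + ((1:ℝ)/2 * ((∫ s in (0:ℝ)..(s₄ τ), pdet (γ s) (deriv γ s))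
            - ∫ s in (0:ℝ)..(s₃ τ), pdet (γ s) (deriv γ s))
          + (1:ℝ)/2 * (γ (s₄ τ) 0 * γ (s₃ τ) 1 - γ (s₄ τ) 1 * γ (s₃ τ) 0)))
        - ((1:ℝ)/2 * ((∫ s in (0:ℝ)..(s₃ τ), pdet (γ s) (deriv γ s))
            - ∫ s in (0:ℝ)..(s₂ τ), pdet (γ s) (deriv γ s))
          + (1:ℝ)/2 * (γ (s₃ τ) 0 * γ (s₂ τ) 1 - γ (s₃ τ) 1 * γ (s₂ τ) 0)
         + ((1:ℝ)/2 * ((∫ s in (0:ℝ)..(s₁ τ + 1), pdet (γ s) (deriv γ s))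
            - ∫ s in (0:ℝ)..(s₄ τ), pdet (γ s) (deriv γ s))
          + (1:ℝ)/2 * (γ (s₁ τ) 0 * γ (s₄ τ) 1 - γ (s₁ τ) 1 * γ (s₄ τ) 0))) := by
      intro τ
      simp only [hA, hA₁, hA₂, hA₃, hA₄]
      rw [hGsub (s₁ τ) (s₂ τ), hGsub (s₂ τ) (s₃ τ), hGsub (s₃ τ) (s₄ τ),
        hGsub (s₄ τ) (s₁ τ + 1), hper (s₁ τ)]
      simp only [pdet]
      try ring
    have hAd := hΦ.congr (fun τ _ => hfun τ) (hfun t)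
    -- geometric facts
    have hparI : ∀ i : Fin 2, ∀ τ ∈ I, γ (s₁ τ) i + γ (s₃ τ) i = γ (s₂ τ) i + γ (s₄ τ) i := by
      intro i τ hτ
      have h := congrArg (fun w : EuclideanSpace ℝ (Fin 2) => w i) (hpar τ hτ)
      simpa [PiLp.add_apply] using h
    have hpx := hparI 0 t ht
    have hpy := hparI 1 t ht
    have hpp : deriv γ (s₁ t) 0 * derivWithin s₁ I t + deriv γ (s₃ t) 0 * derivWithin s₃ I t
        = deriv γ (s₂ t) 0 * derivWithin s₂ I t + deriv γ (s₄ t) 0 * derivWithin s₄ I t := by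
      have hL := h10.add h30
      have hR := (h20.add h40).congr (fun τ hτ => hparI 0 τ hτ) (hparI 0 t ht)
      exact (hL.derivWithin hU).symm.trans (hR.derivWithin hU)
    have hpq : deriv γ (s₁ t) 1 * derivWithin s₁ I t + deriv γ (s₃ t) 1 * derivWithin s₃ I t
        = deriv γ (s₂ t) 1 * derivWithin s₂ I t + deriv γ (s₄ t) 1 * derivWithin s₄ I t := by
      have hL := h11.add h31
      have hR := (h21.add h41).congr (fun τ hτ => hparI 1 τ hτ) (hparI 1 t ht)
      exact (hL.derivWithin hU).symm.trans (hR.derivWithin hU)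
    have hperp0 : (γ (s₂ t) 0 - γ (s₁ t) 0) * (γ (s₄ t) 0 - γ (s₁ t) 0)
        + (γ (s₂ t) 1 - γ (s₁ t) 1) * (γ (s₄ t) 1 - γ (s₁ t) 1) = 0 := by
      have h := hperp t ht
      simp [PiLp.inner_apply, RCLike.inner_apply, Fin.sum_univ_two, PiLp.sub_apply] at h
      linear_combination h
    have hccw0 : 0 < (γ (s₂ t) 0 - γ (s₁ t) 0) * (γ (s₄ t) 1 - γ (s₁ t) 1)
        - (γ (s₂ t) 1 - γ (s₁ t) 1) * (γ (s₄ t) 0 - γ (s₁ t) 0) := by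
      have h := hccw t ht
      simpa [pdet, PiLp.sub_apply] using h
    have hu0 : γ (s₂ t) - γ (s₁ t) ≠ 0 := by
      intro h
      have h2 := hccw t ht
      rw [h] at h2
      simp [pdet] at h2
    have hv0 : γ (s₄ t) - γ (s₁ t) ≠ 0 := by
      intro h
      have h2 := hccw t ht
      rw [h] at h2
      simp [pdet] at h2
    have hXpos : 0 < X t := by
      simp only [hX]
      exact norm_pos_iff.mpr hu0
    have hdiff32 : γ (s₃ t) - γ (s₂ t) = γ (s₄ t) - γ (s₁ t) := by
      rw [sub_eq_sub_iff_add_eq_add, add_comm (γ (s₃ t)) (γ (s₁ t)),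
        add_comm (γ (s₄ t)) (γ (s₂ t))]
      exact hpar t ht
    have hYpos : 0 < Y t := by
      simp only [hY]
      rw [hdiff32]
      exact norm_pos_iff.mpr hv0
    have hXne : X t ≠ 0 := ne_of_gt hXpos
    have hYne : Y t ≠ 0 := ne_of_gt hYpos
    have hXeq : ∀ τ : ℝ, X τ = Real.sqrt ((γ (s₂ τ) 0 - γ (s₁ τ) 0) ^ 2
        + (γ (s₂ τ) 1 - γ (s₁ τ) 1) ^ 2) := by
      intro τ
      simp only [hX]
      rw [EuclideanSpace.norm_eq]
      simp [Fin.sum_univ_two, Real.norm_eq_abs, sq_abs, PiLp.sub_apply]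
    have hYeq : ∀ τ : ℝ, Y τ = Real.sqrt ((γ (s₃ τ) 0 - γ (s₂ τ) 0) ^ 2
        + (γ (s₃ τ) 1 - γ (s₂ τ) 1) ^ 2) := by
      intro τ
      simp only [hY]
      rw [EuclideanSpace.norm_eq]
      simp [Fin.sum_univ_two, Real.norm_eq_abs, sq_abs, PiLp.sub_apply]
    have hX2 : X t ^ 2 = (γ (s₂ t) 0 - γ (s₁ t) 0) ^ 2 + (γ (s₂ t) 1 - γ (s₁ t) 1) ^ 2 := by
      rw [hXeq t]
      exact Real.sq_sqrt (by positivity)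
    have e3x : γ (s₃ t) 0 - γ (s₂ t) 0 = γ (s₄ t) 0 - γ (s₁ t) 0 := by linarith
    have e3y : γ (s₃ t) 1 - γ (s₂ t) 1 = γ (s₄ t) 1 - γ (s₁ t) 1 := by linarith
    have hY2 : Y t ^ 2 = (γ (s₄ t) 0 - γ (s₁ t) 0) ^ 2 + (γ (s₄ t) 1 - γ (s₁ t) 1) ^ 2 := by
      rw [hYeq t, e3x, e3y]
      exact Real.sq_sqrt (by positivity)
    have hXY : X t * Y t = (γ (s₂ t) 0 - γ (s₁ t) 0) * (γ (s₄ t) 1 - γ (s₁ t) 1)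
        - (γ (s₂ t) 1 - γ (s₁ t) 1) * (γ (s₄ t) 0 - γ (s₁ t) 0) := by
      rw [hXeq t, hYeq t, e3x, e3y, ← Real.sqrt_mul (by positivity)]
      rw [show ((γ (s₂ t) 0 - γ (s₁ t) 0) ^ 2 + (γ (s₂ t) 1 - γ (s₁ t) 1) ^ 2)
          * ((γ (s₄ t) 0 - γ (s₁ t) 0) ^ 2 + (γ (s₄ t) 1 - γ (s₁ t) 1) ^ 2)
          = ((γ (s₂ t) 0 - γ (s₁ t) 0) * (γ (s₄ t) 1 - γ (s₁ t) 1)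
            - (γ (s₂ t) 1 - γ (s₁ t) 1) * (γ (s₄ t) 0 - γ (s₁ t) 0)) ^ 2 from by
        linear_combination ((γ (s₂ t) 0 - γ (s₁ t) 0) * (γ (s₄ t) 0 - γ (s₁ t) 0)
          + (γ (s₂ t) 1 - γ (s₁ t) 1) * (γ (s₄ t) 1 - γ (s₁ t) 1)) * hperp0]
      exact Real.sqrt_sq (le_of_lt hccw0)
    have hXd : derivWithin X I t = ((γ (s₂ t) 0 - γ (s₁ t) 0)
          * (deriv γ (s₂ t) 0 * derivWithin s₂ I t - deriv γ (s₁ t) 0 * derivWithin s₁ I t)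
        + (γ (s₂ t) 1 - γ (s₁ t) 1)
          * (deriv γ (s₂ t) 1 * derivWithin s₂ I t - deriv γ (s₁ t) 1 * derivWithin s₁ I t))
        / X t := by
      have hgd := ((h20.sub h10).pow 2).add ((h21.sub h11).pow 2)
      have hne : (γ (s₂ t) 0 - γ (s₁ t) 0) ^ 2 + (γ (s₂ t) 1 - γ (s₁ t) 1) ^ 2 ≠ 0 :=
        hX2 ▸ pow_ne_zero 2 hXne
      have hval := hgd.sqrt hne
      have hXder := hval.congr (fun τ _ => hXeq τ) (hXeq t)
      rw [hXder.derivWithin hU]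
      simp only [Pi.sub_apply, Pi.add_apply, Pi.pow_apply]
      rw [← hXeq t]
      rw [div_eq_div_iff (by positivity) hXne]
      push_cast
      ring
    have hYd : derivWithin Y I t = ((γ (s₃ t) 0 - γ (s₂ t) 0)
          * (deriv γ (s₃ t) 0 * derivWithin s₃ I t - deriv γ (s₂ t) 0 * derivWithin s₂ I t)
        + (γ (s₃ t) 1 - γ (s₂ t) 1)
          * (deriv γ (s₃ t) 1 * derivWithin s₃ I t - deriv γ (s₂ t) 1 * derivWithin s₂ I t))
        / Y t := by
      have hgd := ((h30.sub h20).pow 2).add ((h31.sub h21).pow 2)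
      have hne : (γ (s₃ t) 0 - γ (s₂ t) 0) ^ 2 + (γ (s₃ t) 1 - γ (s₂ t) 1) ^ 2 ≠ 0 := by
        rw [e3x, e3y, ← hY2]
        exact pow_ne_zero 2 hYne
      have hval := hgd.sqrt hne
      have hYder := hval.congr (fun τ _ => hYeq τ) (hYeq t)
      rw [hYder.derivWithin hU]
      simp only [Pi.sub_apply, Pi.add_apply, Pi.pow_apply]
      rw [← hYeq t]
      rw [div_eq_div_iff (by positivity) hYne]
      push_cast
      ring
    refine hdw_congr hAd ?_
    simp only [pdet]
    rw [hXd, hYd, div_aux _ _ _ _ hXne hYne, eq_div_iff (mul_ne_zero hXne hYne)]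
    linear_combination
      (((-1)/2 : ℝ) * (deriv γ (s₄ t) 1 * derivWithin s₄ I t) * (X t) * (Y t) + (-1 : ℝ) * (deriv γ (s₃ t) 1 * derivWithin s₃ I t) * (X t) * (Y t) + ((-1)/2 : ℝ) * (deriv γ (s₂ t) 1 * derivWithin s₂ I t) * (X t) * (Y t) + (1 : ℝ) * (deriv γ (s₃ t) 0 * derivWithin s₃ I t) * (X t) * (X t) + (-1 : ℝ) * (deriv γ (s₂ t) 0 * derivWithin s₂ I t) * (X t) * (X t)) * hpx
      + ((1 : ℝ) * (deriv γ (s₃ t) 1 * derivWithin s₃ I t) * (X t) * (X t) + (-1 : ℝ) * (deriv γ (s₂ t) 1 * derivWithin s₂ I t) * (X t) * (X t) + ((1)/2 : ℝ) * (deriv γ (s₄ t) 0 * derivWithin s₄ I t) * (X t) * (Y t) + (1 : ℝ) * (deriv γ (s₃ t) 0 * derivWithin s₃ I t) * (X t) * (Y t) + ((1)/2 : ℝ) * (deriv γ (s₂ t) 0 * derivWithin s₂ I t) * (X t) * (Y t)) * hpy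
      + (((1)/2 : ℝ) * (γ (s₄ t) 1) * (X t) * (Y t) + ((1)/2 : ℝ) * (γ (s₂ t) 1) * (X t) * (Y t) + (-1 : ℝ) * (γ (s₁ t) 1) * (X t) * (Y t) + (1 : ℝ) * (γ (s₄ t) 0) * (X t) * (X t) + (-1 : ℝ) * (γ (s₁ t) 0) * (X t) * (X t)) * hpp
      + ((1 : ℝ) * (γ (s₄ t) 1) * (X t) * (X t) + (-1 : ℝ) * (γ (s₁ t) 1) * (X t) * (X t) + ((-1)/2 : ℝ) * (γ (s₄ t) 0) * (X t) * (Y t) + ((-1)/2 : ℝ) * (γ (s₂ t) 0) * (X t) * (Y t) + (1 : ℝ) * (γ (s₁ t) 0) * (X t) * (Y t)) * hpq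
      + ((1 : ℝ) * (γ (s₄ t) 1) * (deriv γ (s₂ t) 0 * derivWithin s₂ I t) + (-1 : ℝ) * (γ (s₄ t) 1) * (deriv γ (s₁ t) 0 * derivWithin s₁ I t) + (1 : ℝ) * (γ (s₂ t) 1) * (deriv γ (s₄ t) 0 * derivWithin s₄ I t) + (-1 : ℝ) * (γ (s₂ t) 1) * (deriv γ (s₁ t) 0 * derivWithin s₁ I t) + (-1 : ℝ) * (γ (s₁ t) 1) * (deriv γ (s₄ t) 0 * derivWithin s₄ I t) + (-1 : ℝ) * (γ (s₁ t) 1) * (deriv γ (s₂ t) 0 * derivWithin s₂ I t) + (2 : ℝ) * (γ (s₁ t) 1) * (deriv γ (s₁ t) 0 * derivWithin s₁ I t) + (-1 : ℝ) * (γ (s₄ t) 0) * (deriv γ (s₂ t) 1 * derivWithin s₂ I t) + (1 : ℝ) * (γ (s₄ t) 0) * (deriv γ (s₁ t) 1 * derivWithin s₁ I t) + (-1 : ℝ) * (γ (s₂ t) 0) * (deriv γ (s₄ t) 1 * derivWithin s₄ I t) + (1 : ℝ) * (γ (s₂ t) 0) * (deriv γ (s₁ t) 1 * derivWithin s₁ I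 t) + (1 : ℝ) * (γ (s₁ t) 0) * (deriv γ (s₄ t) 1 * derivWithin s₄ I t) + (1 : ℝ) * (γ (s₁ t) 0) * (deriv γ (s₂ t) 1 * derivWithin s₂ I t) + (-2 : ℝ) * (γ (s₁ t) 0) * (deriv γ (s₁ t) 1 * derivWithin s₁ I t)) * hXY
      + ((1 : ℝ) * (γ (s₄ t) 1) * (deriv γ (s₄ t) 1 * derivWithin s₄ I t) + (-1 : ℝ) * (γ (s₄ t) 1) * (deriv γ (s₁ t) 1 * derivWithin s₁ I t) + (-1 : ℝ) * (γ (s₁ t) 1) * (deriv γ (s₄ t) 1 * derivWithin s₄ I t) + (1 : ℝ) * (γ (s₁ t) 1) * (deriv γ (s₁ t) 1 * derivWithin s₁ I t) + (1 : ℝ) * (γ (s₄ t) 0) * (deriv γ (s₄ t) 0 * derivWithin s₄ I t) + (-1 : ℝ) * (γ (s₄ t) 0) * (deriv γ (s₁ t) 0 * derivWithin s₁ I t) + (-1 : ℝ) * (γ (s₁ t) 0) * (deriv γ (s₄ t) 0 * derivWithin s₄ I t) + (1 : ℝ) * (γ (s₁ t) 0) * (deriv γ (s₁ t) 0 * derivWithin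 s₁ I t)) * hX2
      + ((-1 : ℝ) * (γ (s₂ t) 1) * (deriv γ (s₂ t) 1 * derivWithin s₂ I t) + (1 : ℝ) * (γ (s₂ t) 1) * (deriv γ (s₁ t) 1 * derivWithin s₁ I t) + (1 : ℝ) * (γ (s₁ t) 1) * (deriv γ (s₂ t) 1 * derivWithin s₂ I t) + (-1 : ℝ) * (γ (s₁ t) 1) * (deriv γ (s₁ t) 1 * derivWithin s₁ I t) + (-1 : ℝ) * (γ (s₂ t) 0) * (deriv γ (s₂ t) 0 * derivWithin s₂ I t) + (1 : ℝ) * (γ (s₂ t) 0) * (deriv γ (s₁ t) 0 * derivWithin s₁ I t) + (1 : ℝ) * (γ (s₁ t) 0) * (deriv γ (s₂ t) 0 * derivWithin s₂ I t) + (-1 : ℝ) * (γ (s₁ t) 0) * (deriv γ (s₁ t) 0 * derivWithin s₁ I t)) * hY2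
      + ((-1 : ℝ) * (γ (s₄ t) 1) * (deriv γ (s₂ t) 1 * derivWithin s₂ I t) + (1 : ℝ) * (γ (s₄ t) 1) * (deriv γ (s₁ t) 1 * derivWithin s₁ I t) + (1 : ℝ) * (γ (s₂ t) 1) * (deriv γ (s₄ t) 1 * derivWithin s₄ I t) + (-1 : ℝ) * (γ (s₂ t) 1) * (deriv γ (s₁ t) 1 * derivWithin s₁ I t) + (-1 : ℝ) * (γ (s₁ t) 1) * (deriv γ (s₄ t) 1 * derivWithin s₄ I t) + (1 : ℝ) * (γ (s₁ t) 1) * (deriv γ (s₂ t) 1 * derivWithin s₂ I t) + (-1 : ℝ) * (γ (s₄ t) 0) * (deriv γ (s₂ t) 0 * derivWithin s₂ I t) + (1 : ℝ) * (γ (s₄ t) 0) * (deriv γ (s₁ t) 0 * derivWithin s₁ I t) + (1 : ℝ) * (γ (s₂ t) 0) * (deriv γ (s₄ t) 0 * derivWithin s₄ I t) + (-1 : ℝ) * (γ (s₂ t) 0) * (deriv γ (s₁ t) 0 * derivWithin s₁ I t) + (-1 : ℝ) * (γ (s₁ t) 0) * (deriv γ (s₄ t) 0 * derivWithin s₄ I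 t) + (1 : ℝ) * (γ (s₁ t) 0) * (deriv γ (s₂ t) 0 * derivWithin s₂ I t)) * hperp0
end
end

section
/- Suppose s₁, s₂, s₃, s₄ : I → ℝ are differentiable on the interval I and trace rectangles gracing γ. Then A₁ + A₃ is differentiable on I and (A₁ + A₃)′(t) = −X(t) · Y′(t) for every t ∈ I. -/
noncomputable section

private lemma keyalg (e10 e11 e20 e21 e30 e31 e40 e41
    P10 P11 P20 P21 P30 P31 P40 P41 Xv Yv Yp : ℝ)
    (hp0 : e10 + e30 = e20 + e40) (hp1 : e11 + e31 = e21 + e41)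
    (hq0 : P10 + P30 = P20 + P40) (hq1 : P11 + P31 = P21 + P41)
    (h6 : (e20 - e10) * Yv = Xv * (e41 - e11))
    (h7 : (e21 - e11) * Yv = -(Xv * (e40 - e10)))
    (hYp : Yv * Yp = (e30 - e20) * (P30 - P20) + (e31 - e21) * (P31 - P21))
    (hYne : Yv ≠ 0) :
    -(Xv * Yp) =
      ((1/2) * ((e20*P21 - e21*P20) - (e10*P11 - e11*P10))
        + (1/2) * (P20*e11 + e20*P11 - (P21*e10 + e21*P10)))
      + ((1/2) * ((e40*P41 - e41*P40) - (e30*P31 - e31*P30))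
        + (1/2) * (P40*e31 + e40*P31 - (P41*e30 + e41*P30))) := by
  refine mul_right_cancel₀ hYne ?_
  linear_combination (-Xv) * hYp + (P31-P21)*h6 - (P30-P20)*h7
    + (-Yv*(-(1/2)*(P21+2*P41-P11)) - Xv*(P30-P20))*hp0
    + (-Yv*((1/2)*(P20+2*P40-P10)) - Xv*(P31-P21))*hp1
    + (-Yv*(-(1/2)*(e41-e31)-(e21-e11)))*hq0
    + (-Yv*((1/2)*(e40-e30)+(e20-e10)))*hq1

private lemma perp_lemma (u0 u1 v0 v1 Xv Yv : ℝ)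
    (hip : u0*v0 + u1*v1 = 0) (hpd : 0 < u0*v1 - u1*v0)
    (hX2 : Xv^2 = u0^2+u1^2) (hY2 : Yv^2 = v0^2+v1^2)
    (hXn : 0 ≤ Xv) (hYn : 0 < Yv) :
    u0*Yv = Xv*v1 ∧ u1*Yv = -(Xv*v0) := by
  have hsq : (u0*v1-u1*v0)^2 = (Xv*Yv)^2 := by
    linear_combination (-(Yv^2))*hX2 + (-(u0^2+u1^2))*hY2 + (-(u0*v0+u1*v1))*hip
  have hXY : u0*v1 - u1*v0 = Xv*Yv := by
    have h0 : (u0*v1-u1*v0 - Xv*Yv) * (u0*v1-u1*v0 + Xv*Yv) = 0 := by linear_combination hsq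
    rcases mul_eq_zero.mp h0 with h|h
    · linarith
    · exfalso; nlinarith [mul_nonneg hXn hYn.le]
  constructor
  · refine mul_right_cancel₀ (ne_of_gt hYn) ?_
    linear_combination u0*hY2 + v1*hXY + v0*hip
  · refine mul_right_cancel₀ (ne_of_gt hYn) ?_
    linear_combination u1*hY2 - v0*hXY + v1*hip

/-- If `s₁,…,s₄` are differentiable on the interval `I` and trace rectangles
gracing `γ`, then `A₁ + A₃` is differentiable on `I` with
`(A₁ + A₃)′ = −X · Y′`. -/
theorem stmt3
    (γ : ℝ → EuclideanSpace ℝ (Fin 2)) (hγ : ContDiff ℝ 1 γ)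
    (hper : ∀ s : ℝ, γ (s + 1) = γ s)
    (s₁ s₂ s₃ s₄ : ℝ → ℝ)
    (I : Set ℝ) (hI : I.OrdConnected)
    (hs₁ : ∀ t ∈ I, DifferentiableWithinAt ℝ s₁ I t)
    (hs₂ : ∀ t ∈ I, DifferentiableWithinAt ℝ s₂ I t)
    (hs₃ : ∀ t ∈ I, DifferentiableWithinAt ℝ s₃ I t)
    (hs₄ : ∀ t ∈ I, DifferentiableWithinAt ℝ s₄ I t)
    (hpar : ∀ t ∈ I, γ (s₁ t) + γ (s₃ t) = γ (s₂ t) + γ (s₄ t))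
    (hperp : ∀ t ∈ I, inner ℝ (γ (s₂ t) - γ (s₁ t)) (γ (s₄ t) - γ (s₁ t)) = (0 : ℝ))
    (hccw : ∀ t ∈ I, pdet (γ (s₂ t) - γ (s₁ t)) (γ (s₄ t) - γ (s₁ t)) > 0)
    (X Y : ℝ → ℝ)
    (hX : X = fun t => ‖γ (s₂ t) - γ (s₁ t)‖)
    (hY : Y = fun t => ‖γ (s₃ t) - γ (s₂ t)‖)
    (A₁ A₂ A₃ A₄ : ℝ → ℝ)
    (hA₁ : A₁ = fun t => (1/2) * (∫ s in (s₁ t)..(s₂ t), pdet (γ s) (deriv γ s))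
        + (1/2) * pdet (γ (s₂ t)) (γ (s₁ t)))
    (hA₂ : A₂ = fun t => (1/2) * (∫ s in (s₂ t)..(s₃ t), pdet (γ s) (deriv γ s))
        + (1/2) * pdet (γ (s₃ t)) (γ (s₂ t)))
    (hA₃ : A₃ = fun t => (1/2) * (∫ s in (s₃ t)..(s₄ t), pdet (γ s) (deriv γ s))
        + (1/2) * pdet (γ (s₄ t)) (γ (s₃ t)))
    (hA₄ : A₄ = fun t => (1/2) * (∫ s in (s₄ t)..(s₁ t + 1), pdet (γ s) (deriv γ s))
        + (1/2) * pdet (γ (s₁ t + 1)) (γ (s₄ t)))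
:
    ∀ t ∈ I, HasDerivWithinAt (fun t => A₁ t + A₃ t)
      (-(X t * derivWithin Y I t)) I t := by
  intro t ht
  by_cases hsing : I ⊆ {t}
  · refine HasFDerivWithinAt.of_not_accPt ?_
    intro h
    obtain ⟨y, ⟨_, hyI⟩, hy⟩ := (accPt_iff_nhds.mp h) _ Filter.univ_mem
    exact hy (hsing hyI)
  -- main case: `I` has at least two points, hence unique differentiability at `t`.
  obtain ⟨a, haI, hat⟩ := Set.not_subset.mp hsing
  have hane : a ≠ t := by simpa using hat
  have hconv : Convex ℝ I := hI.convex
  have hUniq : UniqueDiffWithinAt ℝ I t := by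
    refine uniqueDiffWithinAt_convex hconv ?_ (subset_closure ht)
    rcases hane.lt_or_gt with h | h
    · exact ⟨(a+t)/2, interior_mono (hconv.ordConnected.out haI ht)
        (by rw [interior_Icc]; exact ⟨by linarith, by linarith⟩)⟩
    · exact ⟨(t+a)/2, interior_mono (hconv.ordConnected.out ht haI)
        (by rw [interior_Icc]; exact ⟨by linarith, by linarith⟩)⟩
  -- basic differentiability facts
  have hγd : Differentiable ℝ γ := hγ.differentiable one_ne_zero
  -- component derivative of `γ ∘ s`
  have hcomp : ∀ (s : ℝ → ℝ), DifferentiableWithinAt ℝ s I t → ∀ i : Fin 2,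
      HasDerivWithinAt (fun τ => γ (s τ) i) (derivWithin s I t * deriv γ (s t) i) I t := by
    intro s hs i
    have h1 : HasDerivAt (fun x => γ x i) (deriv γ (s t) i) (s t) := by
      have h0 := (EuclideanSpace.proj (𝕜 := ℝ) i).hasFDerivAt.comp_hasDerivAt (s t)
        ((hγd (s t)).hasDerivAt)
      exact h0
    have h2 := h1.comp_hasDerivWithinAt t hs.hasDerivWithinAt
    rw [mul_comm] at h2
    exact h2
  -- vector valued derivative of `γ ∘ s`
  have hvcomp : ∀ (s : ℝ → ℝ), DifferentiableWithinAt ℝ s I t →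
      HasDerivWithinAt (fun τ => γ (s τ)) (derivWithin s I t • deriv γ (s t)) I t := fun s hs =>
    ((hγd (s t)).hasDerivAt).scomp_hasDerivWithinAt t hs.hasDerivWithinAt
  -- continuity of the integrand
  have hgc : Continuous (fun s => pdet (γ s) (deriv γ s)) := by
    have hc : ∀ (f : ℝ → EuclideanSpace ℝ (Fin 2)), Continuous f → ∀ i : Fin 2,
        Continuous (fun s => f s i) := fun f hf i => (EuclideanSpace.proj i).continuous.comp hf
    have hdc : Continuous (deriv γ) := hγ.continuous_deriv le_rfl
    exact ((hc γ hγ.continuous 0).mul (hc _ hdc 1)).sub ((hc γ hγ.continuous 1).mul (hc _ hdc 0))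
  have hG : ∀ b : ℝ, HasDerivAt (fun x => ∫ s in (0:ℝ)..x, pdet (γ s) (deriv γ s))
      (pdet (γ b) (deriv γ b)) b := fun b => (hgc.integral_hasStrictDerivAt 0 b).hasDerivAt
  have hsplit : ∀ a b : ℝ, (∫ s in a..b, pdet (γ s) (deriv γ s))
      = (∫ s in (0:ℝ)..b, pdet (γ s) (deriv γ s)) - ∫ s in (0:ℝ)..a, pdet (γ s) (deriv γ s) :=
    fun a b => (intervalIntegral.integral_interval_sub_left (hgc.intervalIntegrable _ _)
      (hgc.intervalIntegrable _ _)).symm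
  -- rewrite of A₁ + A₃
  have hfun : (fun τ => A₁ τ + A₃ τ) = (fun τ =>
      ((1/2) * ((∫ s in (0:ℝ)..(s₂ τ), pdet (γ s) (deriv γ s))
          - ∫ s in (0:ℝ)..(s₁ τ), pdet (γ s) (deriv γ s))
        + (1/2) * (γ (s₂ τ) 0 * γ (s₁ τ) 1 - γ (s₂ τ) 1 * γ (s₁ τ) 0))
      + ((1/2) * ((∫ s in (0:ℝ)..(s₄ τ), pdet (γ s) (deriv γ s))
          - ∫ s in (0:ℝ)..(s₃ τ), pdet (γ s) (deriv γ s))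
        + (1/2) * (γ (s₄ τ) 0 * γ (s₃ τ) 1 - γ (s₄ τ) 1 * γ (s₃ τ) 0))) := by
    funext τ
    rw [hA₁, hA₃]
    simp only []
    rw [hsplit (s₁ τ) (s₂ τ), hsplit (s₃ τ) (s₄ τ)]
    simp only [pdet]
  -- the big derivative
  have hI1 : HasDerivWithinAt (fun τ => ∫ s in (0:ℝ)..(s₁ τ), pdet (γ s) (deriv γ s))
      (pdet (γ (s₁ t)) (deriv γ (s₁ t)) * derivWithin s₁ I t) I t :=
    (hG (s₁ t)).comp_hasDerivWithinAt t (hs₁ t ht).hasDerivWithinAt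
  have hI2 : HasDerivWithinAt (fun τ => ∫ s in (0:ℝ)..(s₂ τ), pdet (γ s) (deriv γ s))
      (pdet (γ (s₂ t)) (deriv γ (s₂ t)) * derivWithin s₂ I t) I t :=
    (hG (s₂ t)).comp_hasDerivWithinAt t (hs₂ t ht).hasDerivWithinAt
  have hI3 : HasDerivWithinAt (fun τ => ∫ s in (0:ℝ)..(s₃ τ), pdet (γ s) (deriv γ s))
      (pdet (γ (s₃ t)) (deriv γ (s₃ t)) * derivWithin s₃ I t) I t :=
    (hG (s₃ t)).comp_hasDerivWithinAt t (hs₃ t ht).hasDerivWithinAt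
  have hI4 : HasDerivWithinAt (fun τ => ∫ s in (0:ℝ)..(s₄ τ), pdet (γ s) (deriv γ s))
      (pdet (γ (s₄ t)) (deriv γ (s₄ t)) * derivWithin s₄ I t) I t :=
    (hG (s₄ t)).comp_hasDerivWithinAt t (hs₄ t ht).hasDerivWithinAt
  have hc1 := hcomp s₁ (hs₁ t ht)
  have hc2 := hcomp s₂ (hs₂ t ht)
  have hc3 := hcomp s₃ (hs₃ t ht)
  have hc4 := hcomp s₄ (hs₄ t ht)
  have hmain := ((((hI2.sub hI1).const_mul ((1:ℝ)/2)).add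
      ((((hc2 0).mul (hc1 1)).sub ((hc2 1).mul (hc1 0))).const_mul ((1:ℝ)/2))).add
    (((hI4.sub hI3).const_mul ((1:ℝ)/2)).add
      ((((hc4 0).mul (hc3 1)).sub ((hc4 1).mul (hc3 0))).const_mul ((1:ℝ)/2))))
  -- parallelogram identity, componentwise
  have hp : ∀ i : Fin 2, γ (s₁ t) i + γ (s₃ t) i = γ (s₂ t) i + γ (s₄ t) i := by
    intro i
    have h0 := congrArg (fun w : EuclideanSpace ℝ (Fin 2) => w i) (hpar t ht)
    simpa [PiLp.add_apply] using h0
  -- derivative of parallelogram identity, componentwise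
  have hq : ∀ i : Fin 2,
      derivWithin s₁ I t * deriv γ (s₁ t) i + derivWithin s₃ I t * deriv γ (s₃ t) i
      = derivWithin s₂ I t * deriv γ (s₂ t) i + derivWithin s₄ I t * deriv γ (s₄ t) i := by
    intro i
    have h13 : HasDerivWithinAt (fun τ => γ (s₁ τ) i + γ (s₃ τ) i)
        (derivWithin s₁ I t * deriv γ (s₁ t) i + derivWithin s₃ I t * deriv γ (s₃ t) i) I t :=
      (hc1 i).add (hc3 i)
    have h24 : HasDerivWithinAt (fun τ => γ (s₂ τ) i + γ (s₄ τ) i)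
        (derivWithin s₂ I t * deriv γ (s₂ t) i + derivWithin s₄ I t * deriv γ (s₄ t) i) I t :=
      (hc2 i).add (hc4 i)
    have h24' : HasDerivWithinAt (fun τ => γ (s₁ τ) i + γ (s₃ τ) i)
        (derivWithin s₂ I t * deriv γ (s₂ t) i + derivWithin s₄ I t * deriv γ (s₄ t) i) I t := by
      refine h24.congr (fun x hx => ?_) ?_
      · have h0 := congrArg (fun w : EuclideanSpace ℝ (Fin 2) => w i) (hpar x hx)
        simpa [PiLp.add_apply] using h0
      · have h0 := congrArg (fun w : EuclideanSpace ℝ (Fin 2) => w i) (hpar t ht)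
        simpa [PiLp.add_apply] using h0
    exact (h13.derivWithin hUniq).symm.trans (h24'.derivWithin hUniq)
  -- the vector p₃ - p₂ is nonzero
  have hvne : γ (s₃ t) - γ (s₂ t) ≠ 0 := by
    intro h
    have hz : ∀ i : Fin 2, γ (s₃ t) i - γ (s₂ t) i = 0 := by
      intro i
      have h0 := congrArg (fun w : EuclideanSpace ℝ (Fin 2) => w i) h
      simpa [PiLp.sub_apply] using h0
    have hcc := hccw t ht
    simp only [pdet, PiLp.sub_apply] at hcc
    have h40 : γ (s₄ t) 0 - γ (s₁ t) 0 = 0 := by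
      have := hp 0; have := hz 0; linarith
    have h41 : γ (s₄ t) 1 - γ (s₁ t) 1 = 0 := by
      have := hp 1; have := hz 1; linarith
    rw [h40, h41] at hcc
    simp at hcc
  have hYpos : (0:ℝ) < ‖γ (s₃ t) - γ (s₂ t)‖ := norm_pos_iff.mpr hvne
  -- derivative of the vector p₃ - p₂
  have hvfun : HasDerivWithinAt (fun τ => γ (s₃ τ) - γ (s₂ τ))
      (derivWithin s₃ I t • deriv γ (s₃ t) - derivWithin s₂ I t • deriv γ (s₂ t)) I t :=
    (hvcomp s₃ (hs₃ t ht)).sub (hvcomp s₂ (hs₂ t ht))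
  -- Y is differentiable within I at t
  have hYdiff : DifferentiableWithinAt ℝ Y I t := by
    rw [hY]
    exact hvfun.differentiableWithinAt.norm ℝ hvne
  have hYder : HasDerivWithinAt Y (derivWithin Y I t) I t := hYdiff.hasDerivWithinAt
  -- relation Y · Y′ = ⟪v, v′⟫
  have hsq1 : HasDerivWithinAt (fun τ => ‖γ (s₃ τ) - γ (s₂ τ)‖^2)
      (2 * (inner ℝ (γ (s₃ t) - γ (s₂ t))
        (derivWithin s₃ I t • deriv γ (s₃ t) - derivWithin s₂ I t • deriv γ (s₂ t)) : ℝ)) I t :=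
    hvfun.norm_sq
  have hsq2 : HasDerivWithinAt (fun τ => ‖γ (s₃ τ) - γ (s₂ τ)‖^2)
      (derivWithin Y I t * Y t + Y t * derivWithin Y I t) I t := by
    refine (hYder.mul hYder).congr (fun x _ => ?_) ?_ <;> rw [hY] <;> exact pow_two _
  have hYYp : Y t * derivWithin Y I t = (inner ℝ (γ (s₃ t) - γ (s₂ t))
      (derivWithin s₃ I t • deriv γ (s₃ t) - derivWithin s₂ I t • deriv γ (s₂ t)) : ℝ) := by
    have e1 := hsq1.derivWithin hUniq
    have e2 := hsq2.derivWithin hUniq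
    rw [e1] at e2
    linarith
  have hinner : (inner ℝ (γ (s₃ t) - γ (s₂ t))
      (derivWithin s₃ I t • deriv γ (s₃ t) - derivWithin s₂ I t • deriv γ (s₂ t)) : ℝ)
      = (γ (s₃ t) 0 - γ (s₂ t) 0) *
          (derivWithin s₃ I t * deriv γ (s₃ t) 0 - derivWithin s₂ I t * deriv γ (s₂ t) 0)
        + (γ (s₃ t) 1 - γ (s₂ t) 1) *
          (derivWithin s₃ I t * deriv γ (s₃ t) 1 - derivWithin s₂ I t * deriv γ (s₂ t) 1) := by
    simp [PiLp.inner_apply, Fin.sum_univ_two, RCLike.inner_apply, PiLp.sub_apply,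
      PiLp.smul_apply, smul_eq_mul]
    ring
  -- norms squared
  have hX2 : ‖γ (s₂ t) - γ (s₁ t)‖^2
      = (γ (s₂ t) 0 - γ (s₁ t) 0)^2 + (γ (s₂ t) 1 - γ (s₁ t) 1)^2 := by
    rw [← real_inner_self_eq_norm_sq]
    simp only [PiLp.inner_apply, Fin.sum_univ_two, RCLike.inner_apply, PiLp.sub_apply, conj_trivial]
    ring
  have hY2 : ‖γ (s₃ t) - γ (s₂ t)‖^2
      = (γ (s₄ t) 0 - γ (s₁ t) 0)^2 + (γ (s₄ t) 1 - γ (s₁ t) 1)^2 := by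
    have h0 : ‖γ (s₃ t) - γ (s₂ t)‖^2
        = (γ (s₃ t) 0 - γ (s₂ t) 0)^2 + (γ (s₃ t) 1 - γ (s₂ t) 1)^2 := by
      rw [← real_inner_self_eq_norm_sq]
      simp only [PiLp.inner_apply, Fin.sum_univ_two, RCLike.inner_apply, PiLp.sub_apply, conj_trivial]
      ring
    have hp0 := hp 0; have hp1 := hp 1
    linear_combination h0 + ((γ (s₃ t) 0 - γ (s₂ t) 0) + (γ (s₄ t) 0 - γ (s₁ t) 0)) * hp0
      + ((γ (s₃ t) 1 - γ (s₂ t) 1) + (γ (s₄ t) 1 - γ (s₁ t) 1)) * hp1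
  -- orthogonality and orientation componentwise
  have hip : (γ (s₂ t) 0 - γ (s₁ t) 0) * (γ (s₄ t) 0 - γ (s₁ t) 0)
      + (γ (s₂ t) 1 - γ (s₁ t) 1) * (γ (s₄ t) 1 - γ (s₁ t) 1) = 0 := by
    have h0 := hperp t ht
    simp [PiLp.inner_apply, Fin.sum_univ_two, RCLike.inner_apply, PiLp.sub_apply] at h0
    linarith
  have hpd : 0 < (γ (s₂ t) 0 - γ (s₁ t) 0) * (γ (s₄ t) 1 - γ (s₁ t) 1)
      - (γ (s₂ t) 1 - γ (s₁ t) 1) * (γ (s₄ t) 0 - γ (s₁ t) 0) := by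
    have h0 := hccw t ht
    simpa [pdet, PiLp.sub_apply] using h0
  obtain ⟨h6, h7⟩ := perp_lemma (γ (s₂ t) 0 - γ (s₁ t) 0) (γ (s₂ t) 1 - γ (s₁ t) 1)
    (γ (s₄ t) 0 - γ (s₁ t) 0) (γ (s₄ t) 1 - γ (s₁ t) 1)
    ‖γ (s₂ t) - γ (s₁ t)‖ ‖γ (s₃ t) - γ (s₂ t)‖ hip hpd hX2 hY2 (norm_nonneg _) hYpos
  -- finish
  rw [hfun]
  convert hmain using 1
  · rfl
  · rfl
  · rfl
  simp only [pdet]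
  have hYYp' : ‖γ (s₃ t) - γ (s₂ t)‖ * derivWithin Y I t
      = (γ (s₃ t) 0 - γ (s₂ t) 0) *
          (derivWithin s₃ I t * deriv γ (s₃ t) 0 - derivWithin s₂ I t * deriv γ (s₂ t) 0)
        + (γ (s₃ t) 1 - γ (s₂ t) 1) *
          (derivWithin s₃ I t * deriv γ (s₃ t) 1 - derivWithin s₂ I t * deriv γ (s₂ t) 1) := by
    have hYt : Y t = ‖γ (s₃ t) - γ (s₂ t)‖ := by rw [hY]
    rw [← hinner, ← hYYp, hYt]
  have K := keyalg (γ (s₁ t) 0) (γ (s₁ t) 1) (γ (s₂ t) 0) (γ (s₂ t) 1)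
    (γ (s₃ t) 0) (γ (s₃ t) 1) (γ (s₄ t) 0) (γ (s₄ t) 1)
    (derivWithin s₁ I t * deriv γ (s₁ t) 0) (derivWithin s₁ I t * deriv γ (s₁ t) 1)
    (derivWithin s₂ I t * deriv γ (s₂ t) 0) (derivWithin s₂ I t * deriv γ (s₂ t) 1)
    (derivWithin s₃ I t * deriv γ (s₃ t) 0) (derivWithin s₃ I t * deriv γ (s₃ t) 1)
    (derivWithin s₄ I t * deriv γ (s₄ t) 0) (derivWithin s₄ I t * deriv γ (s₄ t) 1)
    ‖γ (s₂ t) - γ (s₁ t)‖ ‖γ (s₃ t) - γ (s₂ t)‖ (derivWithin Y I t)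
    (hp 0) (hp 1) (hq 0) (hq 1) h6 h7 hYYp' (ne_of_gt hYpos)
  have hXt : X t = ‖γ (s₂ t) - γ (s₁ t)‖ := by rw [hX]
  rw [hXt]
  linear_combination K
end
end

section
/- Suppose s₁, s₂, s₃, s₄ : I → ℝ are differentiable on the interval I and trace rectangles gracing γ. Then A₂ + A₄ is differentiable on I and (A₂ + A₄)′(t) = −Y(t) · X′(t) for every t ∈ I. -/
noncomputable section

lemma coordDeriv (γ : ℝ → EuclideanSpace ℝ (Fin 2)) (hγ : ContDiff ℝ 1 γ)
    {s : ℝ → ℝ} {d : ℝ} {I : Set ℝ} {t : ℝ} (hs : HasDerivWithinAt s d I t) (i : Fin 2) :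
    HasDerivWithinAt (fun t => γ (s t) i) (d * (deriv γ (s t) i)) I t := by
  have h1 : HasDerivAt γ (deriv γ (s t)) (s t) := ((hγ.differentiable one_ne_zero) (s t)).hasDerivAt
  have h2 : HasDerivWithinAt (fun u => γ (s u)) (d • deriv γ (s t)) I t :=
    h1.scomp_hasDerivWithinAt t hs
  have h3 := (EuclideanSpace.proj i (𝕜 := ℝ)).hasFDerivAt.comp_hasDerivWithinAt t h2
  simp at h3; exact h3

lemma derivPeriodic (γ : ℝ → EuclideanSpace ℝ (Fin 2))
    (hper : ∀ s : ℝ, γ (s + 1) = γ s) (s : ℝ) : deriv γ (s + 1) = deriv γ s := by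
  have : (fun x => γ (x + 1)) = γ := funext hper
  rw [← deriv_comp_add_const γ 1, this]

lemma hasDerivWithinAt_singleton' (f : ℝ → ℝ) (f' x : ℝ) : HasDerivWithinAt f f' {x} x := by
  simp [HasDerivWithinAt, hasDerivAtFilter_iff_isLittleO, nhdsWithin_singleton,
    Asymptotics.isLittleO_pure]

set_option maxHeartbeats 2000000 in
/-- If `s₁,…,s₄` are differentiable on the interval `I` and trace rectangles
gracing `γ`, then `A₂ + A₄` is differentiable on `I` with
`(A₂ + A₄)′ = −Y · X′`. -/
theorem stmt4
    (γ : ℝ → EuclideanSpace ℝ (Fin 2)) (hγ : ContDiff ℝ 1 γ)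
    (hper : ∀ s : ℝ, γ (s + 1) = γ s)
    (s₁ s₂ s₃ s₄ : ℝ → ℝ)
    (I : Set ℝ) (hI : I.OrdConnected)
    (hs₁ : ∀ t ∈ I, DifferentiableWithinAt ℝ s₁ I t)
    (hs₂ : ∀ t ∈ I, DifferentiableWithinAt ℝ s₂ I t)
    (hs₃ : ∀ t ∈ I, DifferentiableWithinAt ℝ s₃ I t)
    (hs₄ : ∀ t ∈ I, DifferentiableWithinAt ℝ s₄ I t)
    (hpar : ∀ t ∈ I, γ (s₁ t) + γ (s₃ t) = γ (s₂ t) + γ (s₄ t))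
    (hperp : ∀ t ∈ I, inner ℝ (γ (s₂ t) - γ (s₁ t)) (γ (s₄ t) - γ (s₁ t)) = (0 : ℝ))
    (hccw : ∀ t ∈ I, pdet (γ (s₂ t) - γ (s₁ t)) (γ (s₄ t) - γ (s₁ t)) > 0)
    (X Y : ℝ → ℝ)
    (hX : X = fun t => ‖γ (s₂ t) - γ (s₁ t)‖)
    (hY : Y = fun t => ‖γ (s₃ t) - γ (s₂ t)‖)
    (A₁ A₂ A₃ A₄ : ℝ → ℝ)
    (hA₁ : A₁ = fun t => (1/2) * (∫ s in (s₁ t)..(s₂ t), pdet (γ s) (deriv γ s))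
        + (1/2) * pdet (γ (s₂ t)) (γ (s₁ t)))
    (hA₂ : A₂ = fun t => (1/2) * (∫ s in (s₂ t)..(s₃ t), pdet (γ s) (deriv γ s))
        + (1/2) * pdet (γ (s₃ t)) (γ (s₂ t)))
    (hA₃ : A₃ = fun t => (1/2) * (∫ s in (s₃ t)..(s₄ t), pdet (γ s) (deriv γ s))
        + (1/2) * pdet (γ (s₄ t)) (γ (s₃ t)))
    (hA₄ : A₄ = fun t => (1/2) * (∫ s in (s₄ t)..(s₁ t + 1), pdet (γ s) (deriv γ s))
        + (1/2) * pdet (γ (s₁ t + 1)) (γ (s₄ t)))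
:
    ∀ t ∈ I, HasDerivWithinAt (fun t => A₂ t + A₄ t)
      (-(Y t * derivWithin X I t)) I t := by
  intro t ht
  by_cases hI1 : I = {t}
  · rw [hI1]; exact hasDerivWithinAt_singleton' _ _ _
  have hne : ∃ t' ∈ I, t' ≠ t := by
    by_contra h
    push_neg at h
    exact hI1 (Set.eq_singleton_iff_unique_mem.2 ⟨ht, h⟩)
  obtain ⟨t', ht', htt'⟩ := hne
  have htU : UniqueDiffWithinAt ℝ I t := by
    rcases lt_or_gt_of_ne htt' with h | h
    · exact ((uniqueDiffOn_Icc h) t ⟨le_of_lt h, le_refl t⟩).mono (hI.out ht' ht)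
    · exact ((uniqueDiffOn_Icc h) t ⟨le_refl t, le_of_lt h⟩).mono (hI.out ht ht')
  -- the integrand and its antiderivative
  set f : ℝ → ℝ := fun s => pdet (γ s) (deriv γ s) with hf
  have hγc : Continuous γ := hγ.continuous
  have hγ'c : Continuous (deriv γ) := hγ.continuous_deriv le_rfl
  have hfc : Continuous f := by
    apply Continuous.sub
    · exact (((EuclideanSpace.proj (0:Fin 2) (𝕜:=ℝ)).continuous.comp hγc).mul
        ((EuclideanSpace.proj (1:Fin 2) (𝕜:=ℝ)).continuous.comp hγ'c))
    · exact (((EuclideanSpace.proj (1:Fin 2) (𝕜:=ℝ)).continuous.comp hγc).mul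
        ((EuclideanSpace.proj (0:Fin 2) (𝕜:=ℝ)).continuous.comp hγ'c))
  set F : ℝ → ℝ := fun x => ∫ s in (0:ℝ)..x, f s with hFdef
  have hF : ∀ x, HasDerivAt F (f x) x := fun x =>
    intervalIntegral.integral_hasDerivAt_right (hfc.intervalIntegrable 0 x)
      hfc.aestronglyMeasurable.stronglyMeasurableAtFilter hfc.continuousAt
  have hsplit : ∀ a b : ℝ, (∫ s in a..b, f s) = F b - F a := by
    intro a b
    rw [hFdef]
    rw [← intervalIntegral.integral_interval_sub_left (hfc.intervalIntegrable 0 b)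
      (hfc.intervalIntegrable 0 a)]
  -- derivatives of the parameters
  set d₁ := derivWithin s₁ I t with hd₁def
  set d₂ := derivWithin s₂ I t with hd₂def
  set d₃ := derivWithin s₃ I t with hd₃def
  set d₄ := derivWithin s₄ I t with hd₄def
  have hd₁ : HasDerivWithinAt s₁ d₁ I t := (hs₁ t ht).hasDerivWithinAt
  have hd₂ : HasDerivWithinAt s₂ d₂ I t := (hs₂ t ht).hasDerivWithinAt
  have hd₃ : HasDerivWithinAt s₃ d₃ I t := (hs₃ t ht).hasDerivWithinAt
  have hd₄ : HasDerivWithinAt s₄ d₄ I t := (hs₄ t ht).hasDerivWithinAt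
  have hd₅ : HasDerivWithinAt (fun u => s₁ u + 1) d₁ I t := hd₁.add_const 1
  -- coordinate derivatives
  have h10 := coordDeriv γ hγ hd₁ 0
  have h11 := coordDeriv γ hγ hd₁ 1
  have h20 := coordDeriv γ hγ hd₂ 0
  have h21 := coordDeriv γ hγ hd₂ 1
  have h30 := coordDeriv γ hγ hd₃ 0
  have h31 := coordDeriv γ hγ hd₃ 1
  have h40 := coordDeriv γ hγ hd₄ 0
  have h41 := coordDeriv γ hγ hd₄ 1
  have h50 : HasDerivWithinAt (fun u => γ (s₁ u + 1) 0) (d₁ * deriv γ (s₁ t) 0) I t := by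
    have := coordDeriv γ hγ hd₅ 0
    rwa [derivPeriodic γ hper] at this
  have h51 : HasDerivWithinAt (fun u => γ (s₁ u + 1) 1) (d₁ * deriv γ (s₁ t) 1) I t := by
    have := coordDeriv γ hγ hd₅ 1
    rwa [derivPeriodic γ hper] at this
  -- derivative of A₂
  have eA2 : A₂ = fun u => (1/2 : ℝ) * (F (s₃ u) - F (s₂ u))
      + (1/2 : ℝ) * (γ (s₃ u) 0 * γ (s₂ u) 1 - γ (s₃ u) 1 * γ (s₂ u) 0) := by
    rw [hA₂]; funext u; rw [hsplit]; rfl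
  have eA4 : A₄ = fun u => (1/2 : ℝ) * (F (s₁ u + 1) - F (s₄ u))
      + (1/2 : ℝ) * (γ (s₁ u + 1) 0 * γ (s₄ u) 1 - γ (s₁ u + 1) 1 * γ (s₄ u) 0) := by
    rw [hA₄]; funext u; rw [hsplit]; rfl
  have hA2' : HasDerivWithinAt A₂
      ((1/2 : ℝ) * (f (s₃ t) * d₃ - f (s₂ t) * d₂)
        + (1/2 : ℝ) * ((d₃ * deriv γ (s₃ t) 0 * γ (s₂ t) 1 + γ (s₃ t) 0 * (d₂ * deriv γ (s₂ t) 1))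
          - (d₃ * deriv γ (s₃ t) 1 * γ (s₂ t) 0 + γ (s₃ t) 1 * (d₂ * deriv γ (s₂ t) 0)))) I t := by
    rw [eA2]
    exact ((((hF (s₃ t)).comp_hasDerivWithinAt t hd₃).sub
      ((hF (s₂ t)).comp_hasDerivWithinAt t hd₂)).const_mul (1/2 : ℝ)).add
      (((h30.mul h21).sub (h31.mul h20)).const_mul (1/2 : ℝ))
  have hg5 : γ (s₁ t + 1) = γ (s₁ t) := hper _
  have hfper : f (s₁ t + 1) = f (s₁ t) := by
    rw [hf]; simp only []; rw [hg5, derivPeriodic γ hper]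
  have hA4' : HasDerivWithinAt A₄
      ((1/2 : ℝ) * (f (s₁ t) * d₁ - f (s₄ t) * d₄)
        + (1/2 : ℝ) * ((d₁ * deriv γ (s₁ t) 0 * γ (s₄ t) 1 + γ (s₁ t) 0 * (d₄ * deriv γ (s₄ t) 1))
          - (d₁ * deriv γ (s₁ t) 1 * γ (s₄ t) 0 + γ (s₁ t) 1 * (d₄ * deriv γ (s₄ t) 0)))) I t := by
    rw [eA4, ← hfper, ← hg5]
    exact ((((hF (s₁ t + 1)).comp_hasDerivWithinAt t hd₅).sub
      ((hF (s₄ t)).comp_hasDerivWithinAt t hd₄)).const_mul (1/2 : ℝ)).add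
      (((h50.mul h41).sub (h51.mul h40)).const_mul (1/2 : ℝ))
  have hD := hA2'.add hA4'
  convert hD using 1
  case e'_4 => rfl
  case e'_5 => rfl
  case e'_8 => rfl
  -- expand X as an explicit square root
  have hXfun : X = fun u => Real.sqrt ((γ (s₂ u) 0 - γ (s₁ u) 0)^2 + (γ (s₂ u) 1 - γ (s₁ u) 1)^2) := by
    rw [hX]; funext u; rw [EuclideanSpace.norm_eq]
    simp [Fin.sum_univ_two, Real.norm_eq_abs, sq_abs]
  have hcc := hccw t ht
  simp only [pdet, PiLp.sub_apply] at hcc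
  have hq := hperp t ht
  simp only [PiLp.inner_apply, RCLike.inner_apply, conj_trivial, Fin.sum_univ_two,
    PiLp.sub_apply] at hq
  have hgt : (0:ℝ) < (γ (s₂ t) 0 - γ (s₁ t) 0)^2 + (γ (s₂ t) 1 - γ (s₁ t) 1)^2 := by
    rcases lt_or_eq_of_le (by positivity :
        (0:ℝ) ≤ (γ (s₂ t) 0 - γ (s₁ t) 0)^2 + (γ (s₂ t) 1 - γ (s₁ t) 1)^2) with h | h
    · exact h
    · exfalso
      have h0 : γ (s₂ t) 0 - γ (s₁ t) 0 = 0 := by nlinarith [sq_nonneg (γ (s₂ t) 0 - γ (s₁ t) 0), sq_nonneg (γ (s₂ t) 1 - γ (s₁ t) 1)]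
      have h1 : γ (s₂ t) 1 - γ (s₁ t) 1 = 0 := by nlinarith [sq_nonneg (γ (s₂ t) 0 - γ (s₁ t) 0), sq_nonneg (γ (s₂ t) 1 - γ (s₁ t) 1)]
      rw [h0, h1] at hcc
      simp at hcc
  have hgd : HasDerivWithinAt
      (fun u => (γ (s₂ u) 0 - γ (s₁ u) 0)^2 + (γ (s₂ u) 1 - γ (s₁ u) 1)^2)
      ((2:ℝ) * (γ (s₂ t) 0 - γ (s₁ t) 0) ^ (2-1) * (d₂ * deriv γ (s₂ t) 0 - d₁ * deriv γ (s₁ t) 0)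
        + (2:ℝ) * (γ (s₂ t) 1 - γ (s₁ t) 1) ^ (2-1) * (d₂ * deriv γ (s₂ t) 1 - d₁ * deriv γ (s₁ t) 1)) I t :=
    ((h20.sub h10).pow 2).add ((h21.sub h11).pow 2)
  set Xt := Real.sqrt ((γ (s₂ t) 0 - γ (s₁ t) 0)^2 + (γ (s₂ t) 1 - γ (s₁ t) 1)^2) with hXtdef
  have hXt_pos : 0 < Xt := Real.sqrt_pos.2 hgt
  have hXd : HasDerivWithinAt X
      (1 / (2 * Xt) * ((2:ℝ) * (γ (s₂ t) 0 - γ (s₁ t) 0) ^ (2-1) * (d₂ * deriv γ (s₂ t) 0 - d₁ * deriv γ (s₁ t) 0)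
        + (2:ℝ) * (γ (s₂ t) 1 - γ (s₁ t) 1) ^ (2-1) * (d₂ * deriv γ (s₂ t) 1 - d₁ * deriv γ (s₁ t) 1))) I t := by
    rw [hXfun]
    exact (Real.hasDerivAt_sqrt (ne_of_gt hgt)).comp_hasDerivWithinAt t hgd
  rw [hXd.derivWithin htU, hY]
  beta_reduce
  set Yt := ‖γ (s₃ t) - γ (s₂ t)‖ with hYtdef
  simp only [hf, pdet]
  -- coordinates of the parallelogram identity
  have hp0 := congrArg (fun v : EuclideanSpace ℝ (Fin 2) => v 0) (hpar t ht)
  simp only [PiLp.add_apply] at hp0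
  have hp1 := congrArg (fun v : EuclideanSpace ℝ (Fin 2) => v 1) (hpar t ht)
  simp only [PiLp.add_apply] at hp1
  -- derivative of the parallelogram identity
  have hR0 : HasDerivWithinAt (fun u => γ (s₁ u) 0 + γ (s₃ u) 0)
      (d₂ * deriv γ (s₂ t) 0 + d₄ * deriv γ (s₄ t) 0) I t := by
    refine (h20.add h40).congr (fun u hu => ?_) ?_
    · have := congrArg (fun v : EuclideanSpace ℝ (Fin 2) => v 0) (hpar u hu)
      simp only [PiLp.add_apply] at this; simp only [Pi.add_apply]; linarith
    · have := hp0; simp only [Pi.add_apply]; linarith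
  have hR1 : HasDerivWithinAt (fun u => γ (s₁ u) 1 + γ (s₃ u) 1)
      (d₂ * deriv γ (s₂ t) 1 + d₄ * deriv γ (s₄ t) 1) I t := by
    refine (h21.add h41).congr (fun u hu => ?_) ?_
    · have := congrArg (fun v : EuclideanSpace ℝ (Fin 2) => v 1) (hpar u hu)
      simp only [PiLp.add_apply] at this; simp only [Pi.add_apply]; linarith
    · have := hp1; simp only [Pi.add_apply]; linarith
  have ed0 : d₁ * deriv γ (s₁ t) 0 + d₃ * deriv γ (s₃ t) 0
      = d₂ * deriv γ (s₂ t) 0 + d₄ * deriv γ (s₄ t) 0 :=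
    ((h10.add h30).derivWithin htU).symm.trans (hR0.derivWithin htU)
  have ed1 : d₁ * deriv γ (s₁ t) 1 + d₃ * deriv γ (s₃ t) 1
      = d₂ * deriv γ (s₂ t) 1 + d₄ * deriv γ (s₄ t) 1 :=
    ((h11.add h31).derivWithin htU).symm.trans (hR1.derivWithin htU)
  -- length identities
  have hXsq : Xt^2 = (γ (s₂ t) 0 - γ (s₁ t) 0)^2 + (γ (s₂ t) 1 - γ (s₁ t) 1)^2 :=
    Real.sq_sqrt (le_of_lt hgt)
  have hYsq : Yt^2 = (γ (s₄ t) 0 - γ (s₁ t) 0)^2 + (γ (s₄ t) 1 - γ (s₁ t) 1)^2 := by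
    rw [hYtdef, EuclideanSpace.norm_eq, Real.sq_sqrt (by positivity)]
    simp only [Fin.sum_univ_two, PiLp.sub_apply, Real.norm_eq_abs, sq_abs]
    have e0 : γ (s₃ t) 0 - γ (s₂ t) 0 = γ (s₄ t) 0 - γ (s₁ t) 0 := by linarith
    have e1 : γ (s₃ t) 1 - γ (s₂ t) 1 = γ (s₄ t) 1 - γ (s₁ t) 1 := by linarith
    rw [e0, e1]
  have hYnn : 0 ≤ Yt := norm_nonneg _
  have hpp : ((γ (s₂ t) 0 - γ (s₁ t) 0) * (γ (s₄ t) 1 - γ (s₁ t) 1)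
      - (γ (s₂ t) 1 - γ (s₁ t) 1) * (γ (s₄ t) 0 - γ (s₁ t) 0))^2 = Xt^2 * Yt^2 := by
    linear_combination (-(Yt^2)) * hXsq
      + (-((γ (s₂ t) 0 - γ (s₁ t) 0)^2 + (γ (s₂ t) 1 - γ (s₁ t) 1)^2)) * hYsq
      + (-((γ (s₂ t) 0 - γ (s₁ t) 0) * (γ (s₄ t) 0 - γ (s₁ t) 0)
          + (γ (s₂ t) 1 - γ (s₁ t) 1) * (γ (s₄ t) 1 - γ (s₁ t) 1))) * hq
  have hpd : (γ (s₂ t) 0 - γ (s₁ t) 0) * (γ (s₄ t) 1 - γ (s₁ t) 1)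
      - (γ (s₂ t) 1 - γ (s₁ t) 1) * (γ (s₄ t) 0 - γ (s₁ t) 0) = Xt * Yt := by
    have h1 : (((γ (s₂ t) 0 - γ (s₁ t) 0) * (γ (s₄ t) 1 - γ (s₁ t) 1)
        - (γ (s₂ t) 1 - γ (s₁ t) 1) * (γ (s₄ t) 0 - γ (s₁ t) 0)) - Xt * Yt)
        * (((γ (s₂ t) 0 - γ (s₁ t) 0) * (γ (s₄ t) 1 - γ (s₁ t) 1)
        - (γ (s₂ t) 1 - γ (s₁ t) 1) * (γ (s₄ t) 0 - γ (s₁ t) 0)) + Xt * Yt) = 0 := by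
      linear_combination hpp
    have h2 : 0 ≤ Xt * Yt := mul_nonneg (le_of_lt hXt_pos) hYnn
    rcases mul_eq_zero.1 h1 with h | h
    · linarith
    · linarith
  have hXne : Xt ≠ 0 := ne_of_gt hXt_pos
  have hw0X : (γ (s₄ t) 0 - γ (s₁ t) 0) * Xt = -((γ (s₂ t) 1 - γ (s₁ t) 1) * Yt) := by
    apply mul_left_cancel₀ hXne
    linear_combination (-(γ (s₂ t) 1 - γ (s₁ t) 1)) * hpd
      + (γ (s₂ t) 0 - γ (s₁ t) 0) * hq + (γ (s₄ t) 0 - γ (s₁ t) 0) * hXsq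
  have hw1X : (γ (s₄ t) 1 - γ (s₁ t) 1) * Xt = (γ (s₂ t) 0 - γ (s₁ t) 0) * Yt := by
    apply mul_left_cancel₀ hXne
    linear_combination (γ (s₂ t) 0 - γ (s₁ t) 0) * hpd
      + (γ (s₂ t) 1 - γ (s₁ t) 1) * hq + (γ (s₄ t) 1 - γ (s₁ t) 1) * hXsq
  -- substitutions from the parallelogram identity
  have ha3 : γ (s₃ t) 0 = γ (s₂ t) 0 + γ (s₄ t) 0 - γ (s₁ t) 0 := by linarith
  have hb3 : γ (s₃ t) 1 = γ (s₂ t) 1 + γ (s₄ t) 1 - γ (s₁ t) 1 := by linarith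
  have hP3 : d₃ * deriv γ (s₃ t) 0
      = d₂ * deriv γ (s₂ t) 0 + d₄ * deriv γ (s₄ t) 0 - d₁ * deriv γ (s₁ t) 0 := by linarith
  have hQ3 : d₃ * deriv γ (s₃ t) 1
      = d₂ * deriv γ (s₂ t) 1 + d₄ * deriv γ (s₄ t) 1 - d₁ * deriv γ (s₁ t) 1 := by linarith
  field_simp
  linear_combination
    (-2*(d₂ * deriv γ (s₂ t) 1 - d₁ * deriv γ (s₁ t) 1)) * hw0X
    + (2*(d₂ * deriv γ (s₂ t) 0 - d₁ * deriv γ (s₁ t) 0)) * hw1X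
    + (-Xt*(d₃ * deriv γ (s₃ t) 1 + d₂ * deriv γ (s₂ t) 1)) * ha3
    + (Xt*(d₃ * deriv γ (s₃ t) 0 + d₂ * deriv γ (s₂ t) 0)) * hb3
    + (-Xt*(γ (s₁ t) 1 - γ (s₄ t) 1)) * hP3
    + (-Xt*(γ (s₄ t) 0 - γ (s₁ t) 0)) * hQ3
end
end

section
/- Suppose s₁, s₂, s₃, s₄ : [0,1] → ℝ are continuous on [0,1] and differentiable on (0,1), satisfy the parallelogram and right-angle conditions p₁(t) + p₃(t) = p₂(t) + p₄(t) and ⟨p₂(t) − p₁(t), p₄(t) − p₁(t)⟩ = 0 for all t ∈ [0,1], and trace rectangles gracing γ on the open interval (0,1). Suppose moreover that t ↦ Y(t) X′(t) − X(t) Y′(t) is integrable on [0,1]. Then A(1) − A(0) = ∫₀¹ (Y(t) X′(t) − X(t) Y′(t)) dt. -/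
noncomputable section

lemma hasDerivAt_proj {u : ℝ → EuclideanSpace ℝ (Fin 2)} {u' : EuclideanSpace ℝ (Fin 2)}
    {t : ℝ} (i : Fin 2) (hu : HasDerivAt u u' t) : HasDerivAt (fun t => u t i) (u' i) t :=
  (EuclideanSpace.proj i (𝕜 := ℝ)).hasFDerivAt.comp_hasDerivAt t hu

lemma hasDerivAt_pdet {u v : ℝ → EuclideanSpace ℝ (Fin 2)} {u' v' : EuclideanSpace ℝ (Fin 2)}
    {t : ℝ} (hu : HasDerivAt u u' t) (hv : HasDerivAt v v' t) :
    HasDerivAt (fun t => pdet (u t) (v t))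
      (u' 0 * v t 1 + u t 0 * v' 1 - (u' 1 * v t 0 + u t 1 * v' 0)) t :=
  ((hasDerivAt_proj 0 hu).mul (hasDerivAt_proj 1 hv)).sub
    ((hasDerivAt_proj 1 hu).mul (hasDerivAt_proj 0 hv))

lemma norm_mul_self_eq (w : EuclideanSpace ℝ (Fin 2)) :
    ‖w‖ * ‖w‖ = w 0 * w 0 + w 1 * w 1 := by
  rw [EuclideanSpace.norm_eq, Real.mul_self_sqrt (by positivity)]
  simp [Fin.sum_univ_two, Real.norm_eq_abs, sq_abs]
  ring

lemma key_alg (a0 a1 b0 b1 a0' a1' b0' b1' X Y X' Y' : ℝ)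
    (hperp : a0 * b0 + a1 * b1 = 0)
    (hdet : 0 < a0 * b1 - a1 * b0)
    (hX2 : X * X = a0 * a0 + a1 * a1) (hY2 : Y * Y = b0 * b0 + b1 * b1)
    (hX0 : 0 < X) (hY0 : 0 < Y)
    (hX' : X * X' = a0' * a0 + a1' * a1) (hY' : Y * Y' = b0' * b0 + b1' * b1) :
    (a0' * b1 - a1' * b0) - (a0 * b1' - a1 * b0') = Y * X' - X * Y' := by
  have hd : a0 * b1 - a1 * b0 = X * Y := by
    have h1 : (a0 * b1 - a1 * b0) ^ 2 = (X * Y) ^ 2 := by nlinarith [sq_nonneg (a0*b0+a1*b1)]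
    have h2 : 0 < X * Y := mul_pos hX0 hY0
    nlinarith [sq_nonneg (a0 * b1 - a1 * b0 - X * Y)]
  have hsq : (X * b0 + Y * a1) ^ 2 + (X * b1 - Y * a0) ^ 2 = 0 := by nlinarith
  have h1 : X * b0 = -(Y * a1) := by nlinarith [sq_nonneg (X * b0 + Y * a1), sq_nonneg (X * b1 - Y * a0)]
  have h2 : X * b1 = Y * a0 := by nlinarith [sq_nonneg (X * b0 + Y * a1), sq_nonneg (X * b1 - Y * a0)]
  have e1 : X * (a0' * b1 - a1' * b0) = X * (Y * X') := by
    linear_combination a0' * h2 - a1' * h1 - Y * hX'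
  have e2 : Y * (a0 * b1' - a1 * b0') = Y * (X * Y') := by
    linear_combination -b1' * h2 - b0' * h1 - X * hY'
  have e1' : a0' * b1 - a1' * b0 = Y * X' := mul_left_cancel₀ (ne_of_gt hX0) e1
  have e2' : a0 * b1' - a1 * b0' = X * Y' := mul_left_cancel₀ (ne_of_gt hY0) e2
  linarith

/-- Integral version: if `s₁,…,s₄` are continuous on `[0,1]`, differentiable
on `(0,1)`, satisfy the parallelogram and right-angle conditions on `[0,1]`
and trace rectangles gracing `γ` on `(0,1)`, and `Y X′ − X Y′` is integrable
on `[0,1]`, then `A(1) − A(0) = ∫₀¹ (Y X′ − X Y′)`. -/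
theorem stmt5
    (γ : ℝ → EuclideanSpace ℝ (Fin 2)) (hγ : ContDiff ℝ 1 γ)
    (hper : ∀ s : ℝ, γ (s + 1) = γ s)
    (s₁ s₂ s₃ s₄ : ℝ → ℝ)
    (hc₁ : ContinuousOn s₁ (Set.Icc (0:ℝ) 1)) (hc₂ : ContinuousOn s₂ (Set.Icc (0:ℝ) 1))
    (hc₃ : ContinuousOn s₃ (Set.Icc (0:ℝ) 1)) (hc₄ : ContinuousOn s₄ (Set.Icc (0:ℝ) 1))
    (hd₁ : ∀ t ∈ Set.Ioo (0:ℝ) 1, DifferentiableAt ℝ s₁ t)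
    (hd₂ : ∀ t ∈ Set.Ioo (0:ℝ) 1, DifferentiableAt ℝ s₂ t)
    (hd₃ : ∀ t ∈ Set.Ioo (0:ℝ) 1, DifferentiableAt ℝ s₃ t)
    (hd₄ : ∀ t ∈ Set.Ioo (0:ℝ) 1, DifferentiableAt ℝ s₄ t)
    (hpar : ∀ t ∈ Set.Icc (0:ℝ) 1, γ (s₁ t) + γ (s₃ t) = γ (s₂ t) + γ (s₄ t))
    (hperp : ∀ t ∈ Set.Icc (0:ℝ) 1, inner ℝ (γ (s₂ t) - γ (s₁ t)) (γ (s₄ t) - γ (s₁ t)) = (0 : ℝ))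
    (hccw : ∀ t ∈ Set.Ioo (0:ℝ) 1, pdet (γ (s₂ t) - γ (s₁ t)) (γ (s₄ t) - γ (s₁ t)) > 0)
    (X Y : ℝ → ℝ)
    (hX : X = fun t => ‖γ (s₂ t) - γ (s₁ t)‖)
    (hY : Y = fun t => ‖γ (s₃ t) - γ (s₂ t)‖)
    (hint : IntervalIntegrable (fun t => Y t * deriv X t - X t * deriv Y t)
      MeasureTheory.volume 0 1)
    (A₁ A₂ A₃ A₄ : ℝ → ℝ)
    (hA₁ : A₁ = fun t => (1/2) * (∫ s in (s₁ t)..(s₂ t), pdet (γ s) (deriv γ s))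
        + (1/2) * pdet (γ (s₂ t)) (γ (s₁ t)))
    (hA₂ : A₂ = fun t => (1/2) * (∫ s in (s₂ t)..(s₃ t), pdet (γ s) (deriv γ s))
        + (1/2) * pdet (γ (s₃ t)) (γ (s₂ t)))
    (hA₃ : A₃ = fun t => (1/2) * (∫ s in (s₃ t)..(s₄ t), pdet (γ s) (deriv γ s))
        + (1/2) * pdet (γ (s₄ t)) (γ (s₃ t)))
    (hA₄ : A₄ = fun t => (1/2) * (∫ s in (s₄ t)..(s₁ t + 1), pdet (γ s) (deriv γ s))
        + (1/2) * pdet (γ (s₁ t + 1)) (γ (s₄ t)))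
    (A : ℝ → ℝ) (hA : A = fun t => (A₁ t + A₃ t) - (A₂ t + A₄ t))
:
    A 1 - A 0 = ∫ t in (0:ℝ)..1, (Y t * deriv X t - X t * deriv Y t) := by
  have hγd : Differentiable ℝ γ := hγ.differentiable one_ne_zero
  -- periodicity of the derivative
  have hper' : ∀ s : ℝ, deriv γ (s + 1) = deriv γ s := by
    intro s
    have h1 : HasDerivAt (fun x : ℝ => γ (x + 1)) ((1:ℝ) • deriv γ (s + 1)) s :=
      (hγd (s + 1)).hasDerivAt.scomp_of_eq s ((hasDerivAt_id s).add_const 1) rfl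
    have h2 : (fun x : ℝ => γ (x + 1)) = γ := funext hper
    rw [h2, one_smul] at h1
    exact h1.deriv.symm
  -- continuity of the integrand of F
  have Cγ0 : Continuous fun s => γ s 0 :=
    (EuclideanSpace.proj (0 : Fin 2) (𝕜 := ℝ)).continuous.comp hγ.continuous
  have Cγ1 : Continuous fun s => γ s 1 :=
    (EuclideanSpace.proj (1 : Fin 2) (𝕜 := ℝ)).continuous.comp hγ.continuous
  have Cd : Continuous (deriv γ) := hγ.continuous_deriv le_rfl
  have Cd0 : Continuous fun s => deriv γ s 0 :=
    (EuclideanSpace.proj (0 : Fin 2) (𝕜 := ℝ)).continuous.comp Cd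
  have Cd1 : Continuous fun s => deriv γ s 1 :=
    (EuclideanSpace.proj (1 : Fin 2) (𝕜 := ℝ)).continuous.comp Cd
  have hfc : Continuous fun s => pdet (γ s) (deriv γ s) := by
    simp only [pdet]
    exact (Cγ0.mul Cd1).sub (Cγ1.mul Cd0)
  set F : ℝ → ℝ := fun x => ∫ s in (0:ℝ)..x, pdet (γ s) (deriv γ s) with hFdef
  have hF : ∀ x : ℝ, HasDerivAt F (pdet (γ x) (deriv γ x)) x := fun x =>
    intervalIntegral.integral_hasDerivAt_right (hfc.intervalIntegrable _ _)
      (hfc.stronglyMeasurableAtFilter _ _) hfc.continuousAt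
  have hFcont : Continuous F := Differentiable.continuous (fun x => (hF x).differentiableAt)
  have hsub : ∀ a b : ℝ, (∫ s in a..b, pdet (γ s) (deriv γ s)) = F b - F a := fun a b =>
    (intervalIntegral.integral_interval_sub_left (hfc.intervalIntegrable _ _)
      (hfc.intervalIntegrable _ _)).symm
  -- closed form of A
  have hAeq : A = fun t =>
      ((1/2) * (F (s₂ t) - F (s₁ t)) + (1/2) * pdet (γ (s₂ t)) (γ (s₁ t))
        + ((1/2) * (F (s₄ t) - F (s₃ t)) + (1/2) * pdet (γ (s₄ t)) (γ (s₃ t))))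
      - ((1/2) * (F (s₃ t) - F (s₂ t)) + (1/2) * pdet (γ (s₃ t)) (γ (s₂ t))
        + ((1/2) * (F (s₁ t + 1) - F (s₄ t)) + (1/2) * pdet (γ (s₁ t)) (γ (s₄ t)))) := by
    funext t
    simp only [hA, hA₁, hA₂, hA₃, hA₄, hsub, hper (s₁ t)]
  -- continuity of A on [0,1]
  have hAcont : ContinuousOn A (Set.Icc (0:ℝ) 1) := by
    rw [hAeq]
    have hF1 : ContinuousOn (fun t => F (s₁ t)) (Set.Icc (0:ℝ) 1) := hFcont.comp_continuousOn hc₁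
    have hF2 : ContinuousOn (fun t => F (s₂ t)) (Set.Icc (0:ℝ) 1) := hFcont.comp_continuousOn hc₂
    have hF3 : ContinuousOn (fun t => F (s₃ t)) (Set.Icc (0:ℝ) 1) := hFcont.comp_continuousOn hc₃
    have hF4 : ContinuousOn (fun t => F (s₄ t)) (Set.Icc (0:ℝ) 1) := hFcont.comp_continuousOn hc₄
    have hF5 : ContinuousOn (fun t => F (s₁ t + 1)) (Set.Icc (0:ℝ) 1) :=
      hFcont.comp_continuousOn (hc₁.add continuousOn_const)
    have cpd : ∀ u v : ℝ → ℝ, ContinuousOn u (Set.Icc (0:ℝ) 1) → ContinuousOn v (Set.Icc (0:ℝ) 1) →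
        ContinuousOn (fun t => pdet (γ (u t)) (γ (v t))) (Set.Icc (0:ℝ) 1) := fun u v hu hv =>
      ((Cγ0.comp_continuousOn hu).mul (Cγ1.comp_continuousOn hv)).sub
        ((Cγ1.comp_continuousOn hu).mul (Cγ0.comp_continuousOn hv))
    exact (((continuousOn_const.mul (hF2.sub hF1)).add
        (continuousOn_const.mul (cpd _ _ hc₂ hc₁))).add
        ((continuousOn_const.mul (hF4.sub hF3)).add
        (continuousOn_const.mul (cpd _ _ hc₄ hc₃)))).sub
        ((((continuousOn_const.mul (hF3.sub hF2)).add
        (continuousOn_const.mul (cpd _ _ hc₃ hc₂)))).add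
        ((continuousOn_const.mul (hF5.sub hF4)).add
        (continuousOn_const.mul (cpd _ _ hc₁ hc₄))))
  -- the derivative of A on (0,1)
  have hAderiv : ∀ t ∈ Set.Ioo (0:ℝ) 1,
      HasDerivAt A (Y t * deriv X t - X t * deriv Y t) t := by
    intro t ht
    have ht' : t ∈ Set.Icc (0:ℝ) 1 := Set.Ioo_subset_Icc_self ht
    have hs₁ : HasDerivAt s₁ (deriv s₁ t) t := (hd₁ t ht).hasDerivAt
    have hs₂ : HasDerivAt s₂ (deriv s₂ t) t := (hd₂ t ht).hasDerivAt
    have hs₃ : HasDerivAt s₃ (deriv s₃ t) t := (hd₃ t ht).hasDerivAt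
    have hs₄ : HasDerivAt s₄ (deriv s₄ t) t := (hd₄ t ht).hasDerivAt
    have hp₁ : HasDerivAt (fun u => γ (s₁ u)) (deriv s₁ t • deriv γ (s₁ t)) t :=
      (hγd (s₁ t)).hasDerivAt.scomp_of_eq t hs₁ rfl
    have hp₂ : HasDerivAt (fun u => γ (s₂ u)) (deriv s₂ t • deriv γ (s₂ t)) t :=
      (hγd (s₂ t)).hasDerivAt.scomp_of_eq t hs₂ rfl
    have hp₃ : HasDerivAt (fun u => γ (s₃ u)) (deriv s₃ t • deriv γ (s₃ t)) t :=
      (hγd (s₃ t)).hasDerivAt.scomp_of_eq t hs₃ rfl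
    have hp₄ : HasDerivAt (fun u => γ (s₄ u)) (deriv s₄ t • deriv γ (s₄ t)) t :=
      (hγd (s₄ t)).hasDerivAt.scomp_of_eq t hs₄ rfl
    -- parallelogram for derivatives
    have hqpar : deriv s₃ t • deriv γ (s₃ t) =
        deriv s₂ t • deriv γ (s₂ t) + deriv s₄ t • deriv γ (s₄ t)
          - deriv s₁ t • deriv γ (s₁ t) := by
      have h1 : HasDerivAt (fun u => γ (s₁ u) + γ (s₃ u))
          (deriv s₁ t • deriv γ (s₁ t) + deriv s₃ t • deriv γ (s₃ t)) t := hp₁.add hp₃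
      have h2 : HasDerivAt (fun u => γ (s₂ u) + γ (s₄ u))
          (deriv s₂ t • deriv γ (s₂ t) + deriv s₄ t • deriv γ (s₄ t)) t := hp₂.add hp₄
      have heqf : (fun u => γ (s₁ u) + γ (s₃ u)) =ᶠ[nhds t] (fun u => γ (s₂ u) + γ (s₄ u)) :=
        Filter.eventually_of_mem (isOpen_Ioo.mem_nhds ht)
          (fun u hu => hpar u (Set.Ioo_subset_Icc_self hu))
      have h2' := h2.congr_of_eventuallyEq heqf
      exact eq_sub_of_add_eq' (h1.unique h2')
    have hppar : γ (s₃ t) = γ (s₂ t) + γ (s₄ t) - γ (s₁ t) :=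
      eq_sub_of_add_eq' (hpar t ht')
    have hp₃' : HasDerivAt (fun u => γ (s₃ u))
        (deriv s₂ t • deriv γ (s₂ t) + deriv s₄ t • deriv γ (s₄ t)
          - deriv s₁ t • deriv γ (s₁ t)) t := hqpar ▸ hp₃
    -- derivatives of F ∘ sⱼ
    have H1 : HasDerivAt (fun u => F (s₁ u))
        (pdet (γ (s₁ t)) (deriv γ (s₁ t)) * deriv s₁ t) t := (hF (s₁ t)).comp t hs₁
    have H2 : HasDerivAt (fun u => F (s₂ u))
        (pdet (γ (s₂ t)) (deriv γ (s₂ t)) * deriv s₂ t) t := (hF (s₂ t)).comp t hs₂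
    have H3 : HasDerivAt (fun u => F (s₃ u))
        (pdet (γ (s₃ t)) (deriv γ (s₃ t)) * deriv s₃ t) t := (hF (s₃ t)).comp t hs₃
    have H4 : HasDerivAt (fun u => F (s₄ u))
        (pdet (γ (s₄ t)) (deriv γ (s₄ t)) * deriv s₄ t) t := (hF (s₄ t)).comp t hs₄
    have H3' : HasDerivAt (fun u => F (s₃ u))
        (pdet (γ (s₂ t) + γ (s₄ t) - γ (s₁ t))
          (deriv s₂ t • deriv γ (s₂ t) + deriv s₄ t • deriv γ (s₄ t)
            - deriv s₁ t • deriv γ (s₁ t))) t := by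
      refine H3.congr_deriv ?_
      rw [← hppar, ← hqpar]
      simp only [pdet, PiLp.smul_apply, smul_eq_mul]
      ring
    have H5 : HasDerivAt (fun u => F (s₁ u + 1))
        (pdet (γ (s₁ t)) (deriv γ (s₁ t)) * deriv s₁ t) t := by
      have h0 : HasDerivAt (fun u => s₁ u + 1) (deriv s₁ t) t := hs₁.add_const 1
      have h1 := (hF (s₁ t + 1)).comp t h0
      rwa [hper, hper'] at h1
    -- derivatives of the chord terms
    have P21 := hasDerivAt_pdet hp₂ hp₁
    have P43 := hasDerivAt_pdet hp₄ hp₃'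
    rw [hppar] at P43
    have P32 := hasDerivAt_pdet hp₃' hp₂
    rw [hppar] at P32
    have P14 := hasDerivAt_pdet hp₁ hp₄
    -- assemble
    have big := ((((H2.sub H1).const_mul ((1:ℝ)/2)).add (P21.const_mul ((1:ℝ)/2))).add
        (((H4.sub H3').const_mul ((1:ℝ)/2)).add (P43.const_mul ((1:ℝ)/2)))).sub
        ((((H3'.sub H2).const_mul ((1:ℝ)/2)).add (P32.const_mul ((1:ℝ)/2))).add
        (((H5.sub H4).const_mul ((1:ℝ)/2)).add (P14.const_mul ((1:ℝ)/2))))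
    rw [hAeq]
    refine HasDerivAt.congr_deriv big ?_
    -- now pure algebra
    have hane : γ (s₂ t) - γ (s₁ t) ≠ 0 := by
      intro h
      have hc := hccw t ht
      rw [h] at hc
      simp [pdet] at hc
    have hbne : γ (s₄ t) - γ (s₁ t) ≠ 0 := by
      intro h
      have hc := hccw t ht
      rw [h] at hc
      simp [pdet] at hc
    have hcb : γ (s₃ t) - γ (s₂ t) = γ (s₄ t) - γ (s₁ t) := by
      rw [hppar]; abel
    have hcne : γ (s₃ t) - γ (s₂ t) ≠ 0 := by rw [hcb]; exact hbne
    have hXpos : 0 < X t := by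
      simp only [hX]; exact norm_pos_iff.mpr hane
    have hYpos : 0 < Y t := by
      simp only [hY]; exact norm_pos_iff.mpr hcne
    have hXdiff : DifferentiableAt ℝ X t := by
      rw [hX]; exact ((hp₂.sub hp₁).differentiableAt).norm ℝ hane
    have hYdiff : DifferentiableAt ℝ Y t := by
      rw [hY]; exact ((hp₃'.sub hp₂).differentiableAt).norm ℝ hcne
    -- X * X' relation
    have A0 := hasDerivAt_proj 0 (hp₂.sub hp₁)
    have A1 := hasDerivAt_proj 1 (hp₂.sub hp₁)
    have hd2 := (A0.mul A0).add (A1.mul A1)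
    have hXsqeq : (fun u => X u * X u)
        = (fun u => (γ (s₂ u) - γ (s₁ u)) 0 * (γ (s₂ u) - γ (s₁ u)) 0
            + (γ (s₂ u) - γ (s₁ u)) 1 * (γ (s₂ u) - γ (s₁ u)) 1) := by
      funext u
      simp only [hX]
      exact norm_mul_self_eq _
    have hd1 : HasDerivAt (fun u => X u * X u) (deriv X t * X t + X t * deriv X t) t :=
      hXdiff.hasDerivAt.mul hXdiff.hasDerivAt
    rw [hXsqeq] at hd1
    have EX := hd1.unique hd2
    -- Y * Y' relation
    have B0 := hasDerivAt_proj 0 (hp₃'.sub hp₂)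
    have B1 := hasDerivAt_proj 1 (hp₃'.sub hp₂)
    have hd4 := (B0.mul B0).add (B1.mul B1)
    have hYsqeq : (fun u => Y u * Y u)
        = (fun u => (γ (s₃ u) - γ (s₂ u)) 0 * (γ (s₃ u) - γ (s₂ u)) 0
            + (γ (s₃ u) - γ (s₂ u)) 1 * (γ (s₃ u) - γ (s₂ u)) 1) := by
      funext u
      simp only [hY]
      exact norm_mul_self_eq _
    have hd3 : HasDerivAt (fun u => Y u * Y u) (deriv Y t * Y t + Y t * deriv Y t) t :=
      hYdiff.hasDerivAt.mul hYdiff.hasDerivAt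
    rw [hYsqeq] at hd3
    have EY := hd3.unique hd4
    simp only [Pi.sub_apply] at EY
    rw [hcb] at EY
    -- value relations
    have hX2 : X t * X t = (γ (s₂ t) - γ (s₁ t)) 0 * (γ (s₂ t) - γ (s₁ t)) 0
        + (γ (s₂ t) - γ (s₁ t)) 1 * (γ (s₂ t) - γ (s₁ t)) 1 := by
      simp only [hX]; exact norm_mul_self_eq _
    have hY2 : Y t * Y t = (γ (s₄ t) - γ (s₁ t)) 0 * (γ (s₄ t) - γ (s₁ t)) 0
        + (γ (s₄ t) - γ (s₁ t)) 1 * (γ (s₄ t) - γ (s₁ t)) 1 := by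
      simp only [hY]; rw [norm_mul_self_eq, hcb]
    have hperp' := hperp t ht'
    have hdet' := hccw t ht
    -- scalarize everything
    simp only [pdet, PiLp.inner_apply, RCLike.inner_apply, conj_trivial, Fin.sum_univ_two,
      PiLp.sub_apply, Pi.sub_apply, PiLp.add_apply, PiLp.smul_apply, smul_eq_mul] at hperp' hdet' hX2 hY2 EX EY ⊢
    have hmain := key_alg
      (γ (s₂ t) 0 - γ (s₁ t) 0) (γ (s₂ t) 1 - γ (s₁ t) 1)
      (γ (s₄ t) 0 - γ (s₁ t) 0) (γ (s₄ t) 1 - γ (s₁ t) 1)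
      (deriv s₂ t * deriv γ (s₂ t) 0 - deriv s₁ t * deriv γ (s₁ t) 0)
      (deriv s₂ t * deriv γ (s₂ t) 1 - deriv s₁ t * deriv γ (s₁ t) 1)
      (deriv s₄ t * deriv γ (s₄ t) 0 - deriv s₁ t * deriv γ (s₁ t) 0)
      (deriv s₄ t * deriv γ (s₄ t) 1 - deriv s₁ t * deriv γ (s₁ t) 1)
      (X t) (Y t) (deriv X t) (deriv Y t)
      (by linear_combination hperp')
      (by linarith [hdet'])
      (by linear_combination hX2) (by linear_combination hY2)
      hXpos hYpos
      (by linear_combination (1/2 : ℝ) * EX) (by linear_combination (1/2 : ℝ) * EY)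
    linear_combination hmain
  have hFTC := intervalIntegral.integral_eq_sub_of_hasDerivAt_of_le zero_le_one
    hAcont hAderiv hint
  linarith [hFTC]
end
end

section
/- (Sweep theorem, closed-loop case.) Suppose s₁, s₂, s₃, s₄ : [0,1] → ℝ are continuously differentiable and trace rectangles gracing γ on [0,1], and suppose s_j(1) = s_j(0) for j = 1, 2, 3, 4 (the path of rectangles is a closed loop). Then ∫₀¹ (Y(t) X′(t) − X(t) Y′(t)) dt = 0; that is, the shape loop t ↦ (X(t), Y(t)) bounds signed area 0. -/
noncomputable section

open Set MeasureTheory intervalIntegral Filter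

/-- Derivative of the norm of a curve in the plane. -/
lemma aux_hasDerivAt_norm {q : ℝ → EuclideanSpace ℝ (Fin 2)} {w : EuclideanSpace ℝ (Fin 2)}
    {t : ℝ} (hq : HasDerivAt q w t) (h0 : q t ≠ 0) :
    HasDerivAt (fun τ => ‖q τ‖) ((inner ℝ (q t) w : ℝ) / ‖q t‖) t := by
  have hN : HasDerivAt (fun τ => (inner ℝ (q τ) (q τ) : ℝ))
      ((inner ℝ (q t) w : ℝ) + (inner ℝ w (q t) : ℝ)) t := hq.inner ℝ hq
  have hNpos : (0:ℝ) < (inner ℝ (q t) (q t) : ℝ) := by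
    rw [real_inner_self_eq_norm_mul_norm]
    exact mul_pos (norm_pos_iff.2 h0) (norm_pos_iff.2 h0)
  have hsq := (Real.hasDerivAt_sqrt hNpos.ne').comp t hN
  have hkey : (fun τ => Real.sqrt ((inner ℝ (q τ) (q τ) : ℝ))) = fun τ => ‖q τ‖ := by
    funext τ
    rw [real_inner_self_eq_norm_mul_norm, Real.sqrt_mul_self (norm_nonneg _)]
  have hval : Real.sqrt ((inner ℝ (q t) (q t) : ℝ)) = ‖q t‖ := by
    rw [real_inner_self_eq_norm_mul_norm, Real.sqrt_mul_self (norm_nonneg _)]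
  simp only [Function.comp_def] at hsq
  rw [hkey] at hsq
  refine hsq.congr_deriv ?_
  rw [hval, real_inner_comm w (q t)]
  have : ‖q t‖ ≠ 0 := norm_ne_zero_iff.2 h0
  field_simp
  ring

/-- The vanishing of the loop integral of `s' · (g ∘ s)` for a loop `s`. -/
lemma aux_loop_integral_zero {s : ℝ → ℝ} (hc : ContDiffOn ℝ 1 s (Set.Icc 0 1))
    (hloop : s 1 = s 0) {g : ℝ → ℝ} (hg : Continuous g) :
    ∫ t in (0:ℝ)..1, derivWithin s (Set.Icc 0 1) t * g (s t) = 0 := by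
  have h01 : (0:ℝ) ≤ 1 := zero_le_one
  have huIcc : Set.uIcc (0:ℝ) 1 = Set.Icc 0 1 := Set.uIcc_of_le h01
  have hcont : ContinuousOn s (Set.uIcc (0:ℝ) 1) := huIcc ▸ hc.continuousOn
  have hdiff : DifferentiableOn ℝ s (Set.Icc (0:ℝ) 1) := hc.differentiableOn one_ne_zero
  have hderiv : ∀ x ∈ Set.Ioo (min (0:ℝ) 1) (max (0:ℝ) 1),
      HasDerivWithinAt s (derivWithin s (Set.Icc 0 1) x) (Set.Ioi x) x := by
    intro x hx
    rw [min_eq_left h01, max_eq_right h01] at hx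
    have hmem : Set.Icc (0:ℝ) 1 ∈ nhds x := Icc_mem_nhds hx.1 hx.2
    have hd : DifferentiableAt ℝ s x := (hdiff x (Set.Ioo_subset_Icc_self hx)).differentiableAt hmem
    rw [derivWithin_of_mem_nhds hmem]
    exact hd.hasDerivAt.hasDerivWithinAt
  have hderivcont : ContinuousOn (derivWithin s (Set.Icc 0 1)) (Set.uIcc (0:ℝ) 1) :=
    huIcc ▸ hc.continuousOn_derivWithin (uniqueDiffOn_Icc one_pos) le_rfl
  have := intervalIntegral.integral_comp_smul_deriv'' (a := (0:ℝ)) (b := 1)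
    hcont hderiv hderivcont (hg.continuousOn (s := s '' Set.uIcc 0 1))
  simp only [smul_eq_mul, Function.comp] at this
  rw [this, hloop, intervalIntegral.integral_same]

set_option maxHeartbeats 1000000 in
/-- Sweep theorem, closed-loop case: for a continuously differentiable closed
loop of rectangles gracing `γ`, the shape loop `t ↦ (X t, Y t)` bounds signed
area `0`, i.e. `∫₀¹ (Y X′ − X Y′) = 0`. -/
theorem stmt6
    (γ : ℝ → EuclideanSpace ℝ (Fin 2)) (hγ : ContDiff ℝ 1 γ)
    (hper : ∀ s : ℝ, γ (s + 1) = γ s)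
    (s₁ s₂ s₃ s₄ : ℝ → ℝ)
    (hc₁ : ContDiffOn ℝ 1 s₁ (Set.Icc (0:ℝ) 1)) (hc₂ : ContDiffOn ℝ 1 s₂ (Set.Icc (0:ℝ) 1))
    (hc₃ : ContDiffOn ℝ 1 s₃ (Set.Icc (0:ℝ) 1)) (hc₄ : ContDiffOn ℝ 1 s₄ (Set.Icc (0:ℝ) 1))
    (hpar : ∀ t ∈ Set.Icc (0:ℝ) 1, γ (s₁ t) + γ (s₃ t) = γ (s₂ t) + γ (s₄ t))
    (hperp : ∀ t ∈ Set.Icc (0:ℝ) 1, inner ℝ (γ (s₂ t) - γ (s₁ t)) (γ (s₄ t) - γ (s₁ t)) = (0 : ℝ))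
    (hccw : ∀ t ∈ Set.Icc (0:ℝ) 1, pdet (γ (s₂ t) - γ (s₁ t)) (γ (s₄ t) - γ (s₁ t)) > 0)
    (X Y : ℝ → ℝ)
    (hX : X = fun t => ‖γ (s₂ t) - γ (s₁ t)‖)
    (hY : Y = fun t => ‖γ (s₃ t) - γ (s₂ t)‖)
    (hloop₁ : s₁ 1 = s₁ 0) (hloop₂ : s₂ 1 = s₂ 0)
    (hloop₃ : s₃ 1 = s₃ 0) (hloop₄ : s₄ 1 = s₄ 0) :
    ∫ t in (0:ℝ)..1, (Y t * deriv X t - X t * deriv Y t) = 0 := by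
  classical
  set g : ℝ → ℝ := fun s => pdet (γ s) (deriv γ s) with hgdef
  have hγd : Differentiable ℝ γ := hγ.differentiable one_ne_zero
  have hγ'c : Continuous (deriv γ) := hγ.continuous_deriv le_rfl
  have hgc : Continuous g := by
    apply Continuous.sub
    · exact ((continuous_apply (0 : Fin 2)).comp ((PiLp.continuous_ofLp 2 _).comp hγ.continuous)).mul
        ((continuous_apply (1 : Fin 2)).comp ((PiLp.continuous_ofLp 2 _).comp hγ'c))
    · exact ((continuous_apply (1 : Fin 2)).comp ((PiLp.continuous_ofLp 2 _).comp hγ.continuous)).mul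
        ((continuous_apply (0 : Fin 2)).comp ((PiLp.continuous_ofLp 2 _).comp hγ'c))
  set F₁ := derivWithin s₁ (Set.Icc (0:ℝ) 1) with hF₁
  set F₂ := derivWithin s₂ (Set.Icc (0:ℝ) 1) with hF₂
  set F₃ := derivWithin s₃ (Set.Icc (0:ℝ) 1) with hF₃
  set F₄ := derivWithin s₄ (Set.Icc (0:ℝ) 1) with hF₄
  -- pointwise identity on the interior
  have hpoint : ∀ t ∈ Set.Ioo (0:ℝ) 1,
      Y t * deriv X t - X t * deriv Y t =
      (F₂ t * g (s₂ t) + F₄ t * g (s₄ t)) - (F₁ t * g (s₁ t) + F₃ t * g (s₃ t)) := by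
    intro t ht
    have htIcc : t ∈ Set.Icc (0:ℝ) 1 := Set.Ioo_subset_Icc_self ht
    have hmem : Set.Icc (0:ℝ) 1 ∈ nhds t := Icc_mem_nhds ht.1 ht.2
    -- derivatives of the sⱼ
    have hds : ∀ (s : ℝ → ℝ), ContDiffOn ℝ 1 s (Set.Icc (0:ℝ) 1) →
        HasDerivAt s (derivWithin s (Set.Icc (0:ℝ) 1) t) t := by
      intro s hc
      have hd : DifferentiableAt ℝ s t :=
        ((hc.differentiableOn one_ne_zero) t htIcc).differentiableAt hmem
      rw [derivWithin_of_mem_nhds hmem]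
      exact hd.hasDerivAt
    have hd₁ := hds s₁ hc₁
    have hd₂ := hds s₂ hc₂
    have hd₃ := hds s₃ hc₃
    have hd₄ := hds s₄ hc₄
    -- derivatives of the pⱼ = γ ∘ sⱼ
    have hp₁ : HasDerivAt (fun τ => γ (s₁ τ)) (F₁ t • deriv γ (s₁ t)) t :=
      ((hγd (s₁ t)).hasDerivAt).scomp t hd₁
    have hp₂ : HasDerivAt (fun τ => γ (s₂ τ)) (F₂ t • deriv γ (s₂ t)) t :=
      ((hγd (s₂ t)).hasDerivAt).scomp t hd₂
    have hp₃ : HasDerivAt (fun τ => γ (s₃ τ)) (F₃ t • deriv γ (s₃ t)) t :=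
      ((hγd (s₃ t)).hasDerivAt).scomp t hd₃
    have hp₄ : HasDerivAt (fun τ => γ (s₄ τ)) (F₄ t • deriv γ (s₄ t)) t :=
      ((hγd (s₄ t)).hasDerivAt).scomp t hd₄
    set P₁ := F₁ t • deriv γ (s₁ t)
    set P₂ := F₂ t • deriv γ (s₂ t)
    set P₃ := F₃ t • deriv γ (s₃ t)
    set P₄ := F₄ t • deriv γ (s₄ t)
    -- derivative of the parallelogram relation
    have hparev : (fun τ => γ (s₁ τ) + γ (s₃ τ) - γ (s₂ τ) - γ (s₄ τ)) =ᶠ[nhds t]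
        (fun _ => (0 : EuclideanSpace ℝ (Fin 2))) := by
      filter_upwards [hmem] with τ hτ
      have := hpar τ hτ
      rw [sub_sub, sub_eq_zero, this]
    have hcomb : HasDerivAt (fun τ => γ (s₁ τ) + γ (s₃ τ) - γ (s₂ τ) - γ (s₄ τ))
        (P₁ + P₃ - P₂ - P₄) t := ((hp₁.add hp₃).sub hp₂).sub hp₄
    have hzero : HasDerivAt (fun τ => γ (s₁ τ) + γ (s₃ τ) - γ (s₂ τ) - γ (s₄ τ))
        (0 : EuclideanSpace ℝ (Fin 2)) t :=
      (hasDerivAt_const t (0 : EuclideanSpace ℝ (Fin 2))).congr_of_eventuallyEq hparev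
    have hPsum : P₁ + P₃ - P₂ - P₄ = 0 := hcomb.unique hzero
    -- X and its derivative
    set u := γ (s₂ t) - γ (s₁ t) with hu
    set v := γ (s₄ t) - γ (s₁ t) with hv
    have hune : u ≠ 0 := by
      intro h
      have := hccw t htIcc
      rw [← hu, h] at this
      simp [pdet] at this
    have hvne : v ≠ 0 := by
      intro h
      have := hccw t htIcc
      rw [← hv, h] at this
      simp [pdet] at this
    have hqu : HasDerivAt (fun τ => γ (s₂ τ) - γ (s₁ τ)) (P₂ - P₁) t := hp₂.sub hp₁
    have hqv : HasDerivAt (fun τ => γ (s₄ τ) - γ (s₁ τ)) (P₄ - P₁) t := hp₄.sub hp₁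
    have hXd : HasDerivAt X ((inner ℝ u (P₂ - P₁) : ℝ) / ‖u‖) t := by
      rw [hX]; exact aux_hasDerivAt_norm hqu hune
    -- Y agrees with ‖p₄ - p₁‖ near t
    have hYev : Y =ᶠ[nhds t] (fun τ => ‖γ (s₄ τ) - γ (s₁ τ)‖) := by
      filter_upwards [hmem] with τ hτ
      rw [hY]
      have h := hpar τ hτ
      have : γ (s₃ τ) - γ (s₂ τ) = γ (s₄ τ) - γ (s₁ τ) := by
        rw [sub_eq_sub_iff_add_eq_add, add_comm (γ (s₃ τ)), add_comm (γ (s₄ τ))]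
        exact h
      simp only [this]
    have hYd : HasDerivAt Y ((inner ℝ v (P₄ - P₁) : ℝ) / ‖v‖) t :=
      (aux_hasDerivAt_norm hqv hvne).congr_of_eventuallyEq hYev
    have hYt : Y t = ‖v‖ := by
      rw [hYev.self_of_nhds, hv]
    have hXt : X t = ‖u‖ := by rw [hX]
    rw [hXd.deriv, hYd.deriv, hXt, hYt]
    -- now pure algebra in coordinates
    have hP₃ : P₃ = P₂ + P₄ - P₁ := by
      have h : P₃ - (P₂ + P₄ - P₁) = 0 := by rw [← hPsum]; abel
      exact sub_eq_zero.mp h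
    have hp3v : γ (s₃ t) = γ (s₂ t) + γ (s₄ t) - γ (s₁ t) := by
      have h := hpar t htIcc
      have h2 : γ (s₃ t) - (γ (s₂ t) + γ (s₄ t) - γ (s₁ t)) = 0 := by
        rw [sub_eq_zero, ← h]; abel
      exact sub_eq_zero.mp h2
    -- components
    obtain ⟨U0, U1, V0, V1, A0, A1, B0, B1, hU0, hU1, hV0, hV1, hA0, hA1, hB0, hB1⟩ :
        ∃ U0 U1 V0 V1 A0 A1 B0 B1 : ℝ, u 0 = U0 ∧ u 1 = U1 ∧ v 0 = V0 ∧ v 1 = V1 ∧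
          (P₂ - P₁) 0 = A0 ∧ (P₂ - P₁) 1 = A1 ∧ (P₄ - P₁) 0 = B0 ∧ (P₄ - P₁) 1 = B1 :=
      ⟨_, _, _, _, _, _, _, _, rfl, rfl, rfl, rfl, rfl, rfl, rfl, rfl⟩
    have hinner0 : U0 * V0 + U1 * V1 = 0 := by
      have := hperp t htIcc
      rw [← hu, ← hv] at this
      rw [PiLp.inner_apply, Fin.sum_univ_two] at this
      simp [RCLike.inner_apply, conj_trivial, hU0, hU1, hV0, hV1] at this; linarith
    have hXsq : ‖u‖ ^ 2 = U0 ^ 2 + U1 ^ 2 := by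
      rw [← real_inner_self_eq_norm_sq, PiLp.inner_apply, Fin.sum_univ_two]
      simp [RCLike.inner_apply, conj_trivial, hU0, hU1]
    have hYsq : ‖v‖ ^ 2 = V0 ^ 2 + V1 ^ 2 := by
      rw [← real_inner_self_eq_norm_sq, PiLp.inner_apply, Fin.sum_univ_two]
      simp [RCLike.inner_apply, conj_trivial, hV0, hV1]
    have hXpos : (0:ℝ) < ‖u‖ := norm_pos_iff.2 hune
    have hYpos : (0:ℝ) < ‖v‖ := norm_pos_iff.2 hvne
    have hdetpos : 0 < U0 * V1 - U1 * V0 := by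
      have := hccw t htIcc
      rw [← hu, ← hv] at this
      rw [pdet] at this
      rw [← hU0, ← hU1, ← hV0, ← hV1]
      exact this
    have hdet : ‖u‖ * ‖v‖ = U0 * V1 - U1 * V0 := by
      have hsq : (‖u‖ * ‖v‖) ^ 2 = (U0 * V1 - U1 * V0) ^ 2 := by
        rw [mul_pow, hXsq, hYsq]
        nlinarith [hinner0]
      nlinarith [hsq, hdetpos, mul_pos hXpos hYpos]
    have hIu : (inner ℝ u (P₂ - P₁) : ℝ) = U0 * A0 + U1 * A1 := by
      rw [PiLp.inner_apply, Fin.sum_univ_two]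
      simp [RCLike.inner_apply, conj_trivial, hU0, hU1, hA0, hA1]; ring
    have hIv : (inner ℝ v (P₄ - P₁) : ℝ) = V0 * B0 + V1 * B1 := by
      rw [PiLp.inner_apply, Fin.sum_univ_two]
      simp [RCLike.inner_apply, conj_trivial, hV0, hV1, hB0, hB1]; ring
    -- the right hand side in coordinates
    have hRHS : (F₂ t * g (s₂ t) + F₄ t * g (s₄ t)) - (F₁ t * g (s₁ t) + F₃ t * g (s₃ t)) =
        -(U0 * B1 - U1 * B0) - (V0 * A1 - V1 * A0) := by
      have e₁ : F₁ t * g (s₁ t) = pdet (γ (s₁ t)) P₁ := by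
        simp [hgdef, pdet, P₁, PiLp.smul_apply, smul_eq_mul]; ring
      have e₂ : F₂ t * g (s₂ t) = pdet (γ (s₂ t)) P₂ := by
        simp [hgdef, pdet, P₂, PiLp.smul_apply, smul_eq_mul]; ring
      have e₃ : F₃ t * g (s₃ t) = pdet (γ (s₃ t)) P₃ := by
        simp [hgdef, pdet, P₃, PiLp.smul_apply, smul_eq_mul]; ring
      have e₄ : F₄ t * g (s₄ t) = pdet (γ (s₄ t)) P₄ := by
        simp [hgdef, pdet, P₄, PiLp.smul_apply, smul_eq_mul]; ring
      rw [e₁, e₂, e₃, e₄, hP₃, hp3v]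
      simp only [pdet]
      rw [← hU0, ← hU1, ← hV0, ← hV1, ← hA0, ← hA1, ← hB0, ← hB1]
      simp only [hu, hv, PiLp.sub_apply, PiLp.add_apply]
      ring
    rw [hIu, hIv, hRHS]
    -- final algebraic identity
    have key : (V0 ^ 2 + V1 ^ 2) * (U0 * A0 + U1 * A1) - (U0 ^ 2 + U1 ^ 2) * (V0 * B0 + V1 * B1)
        = (U0 * V1 - U1 * V0) * (-(U0 * B1 - U1 * B0) - (V0 * A1 - V1 * A0)) := by
      linear_combination ((V0 * A0 + V1 * A1) - (U0 * B0 + U1 * B1)) * hinner0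
    have hXne : ‖u‖ ≠ 0 := hXpos.ne'
    have hYne : ‖v‖ ≠ 0 := hYpos.ne'
    have step : ‖v‖ * ((U0 * A0 + U1 * A1) / ‖u‖) - ‖u‖ * ((V0 * B0 + V1 * B1) / ‖v‖)
        = (‖v‖ ^ 2 * (U0 * A0 + U1 * A1) - ‖u‖ ^ 2 * (V0 * B0 + V1 * B1)) / (‖u‖ * ‖v‖) := by
      field_simp
    rw [step, hXsq, hYsq, key, ← hdet, mul_comm (‖u‖ * ‖v‖),
      mul_div_assoc, div_self (mul_ne_zero hXne hYne), mul_one]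
  -- now the integral computation
  have h01 : (0:ℝ) ≤ 1 := zero_le_one
  have huIcc : Set.uIcc (0:ℝ) 1 = Set.Icc 0 1 := Set.uIcc_of_le h01
  have hFcont : ∀ (s : ℝ → ℝ), ContDiffOn ℝ 1 s (Set.Icc (0:ℝ) 1) →
      ContinuousOn (fun t => derivWithin s (Set.Icc (0:ℝ) 1) t * g (s t)) (Set.Icc (0:ℝ) 1) := by
    intro s hc
    exact (hc.continuousOn_derivWithin (uniqueDiffOn_Icc one_pos) le_rfl).mul
      (hgc.comp_continuousOn hc.continuousOn)
  have hInt : ∀ (s : ℝ → ℝ), ContDiffOn ℝ 1 s (Set.Icc (0:ℝ) 1) →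
      IntervalIntegrable (fun t => derivWithin s (Set.Icc (0:ℝ) 1) t * g (s t)) volume 0 1 := by
    intro s hc
    exact ((hFcont s hc).mono (by rw [huIcc])).intervalIntegrable (μ := volume)
  have hI₁ := hInt s₁ hc₁
  have hI₂ := hInt s₂ hc₂
  have hI₃ := hInt s₃ hc₃
  have hI₄ := hInt s₄ hc₄
  have hcongr : ∫ t in (0:ℝ)..1, (Y t * deriv X t - X t * deriv Y t) =
      ∫ t in (0:ℝ)..1, ((F₂ t * g (s₂ t) + F₄ t * g (s₄ t)) - (F₁ t * g (s₁ t) + F₃ t * g (s₃ t))) := by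
    apply intervalIntegral.integral_congr_ae
    have h1 : ∀ᵐ x : ℝ, x ≠ 1 := by
      rw [ae_iff]
      simpa using Real.volume_singleton (a := 1)
    filter_upwards [h1] with x hx hmem
    rw [Set.uIoc_of_le h01] at hmem
    exact hpoint x ⟨hmem.1, lt_of_le_of_ne hmem.2 hx⟩
  rw [hcongr, intervalIntegral.integral_sub ((hI₂.add hI₄)) ((hI₁.add hI₃)),
    intervalIntegral.integral_add hI₂ hI₄, intervalIntegral.integral_add hI₁ hI₃,
    aux_loop_integral_zero hc₁ hloop₁ hgc, aux_loop_integral_zero hc₂ hloop₂ hgc,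
    aux_loop_integral_zero hc₃ hloop₃ hgc, aux_loop_integral_zero hc₄ hloop₄ hgc]
  ring
end
end

section
/- (Sweep theorem, null-arc case.) Suppose s₁, s₂, s₃, s₄ : [0,1] → ℝ are continuous on [0,1] and differentiable on (0,1), satisfy the parallelogram and right-angle conditions p₁(t) + p₃(t) = p₂(t) + p₄(t) and ⟨p₂(t) − p₁(t), p₄(t) − p₁(t)⟩ = 0 for all t ∈ [0,1], and trace rectangles gracing γ on (0,1); suppose t ↦ Y(t) X′(t) − X(t) Y′(t) is integrable on [0,1]. If at both endpoints t = 0 and t = 1 one has s₂(t) = s₃(t) and s₄(t) = s₁(t) + 1 (so the rectangle degenerates to a chord of γ, with Y(0) = Y(1) = 0), then ∫₀¹ (Y(t) X′(t) − X(t) Y′(t)) dt = 0; that is, the shape loop of a null arc bounds signed area 0. -/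
set_option maxHeartbeats 1000000


noncomputable section

/-- Core algebraic identity for the sweep theorem. -/
private lemma key_identity
    (x1 y1 x2 y2 x3 y3 e1 f1 e2 f2 e3 f3 : ℝ)
    (hO : (x2 - x1) * (x3 - x2) + (y2 - y1) * (y3 - y2) = 0)
    (hD : 0 < (x2 - x1) * (y3 - y2) - (y2 - y1) * (x3 - x2)) :
    Real.sqrt ((x3-x2)^2 + (y3-y2)^2) *
        (1 / (2 * Real.sqrt ((x2-x1)^2 + (y2-y1)^2)) *
          (2*(x2-x1)*(e2-e1) + 2*(y2-y1)*(f2-f1)))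
      - Real.sqrt ((x2-x1)^2 + (y2-y1)^2) *
        (1 / (2 * Real.sqrt ((x3-x2)^2 + (y3-y2)^2)) *
          (2*(x3-x2)*(e3-e2) + 2*(y3-y2)*(f3-f2)))
    = (x2*f2 - y2*e2) - (x1*f1 - y1*e1) +
        (((x1+x3-x2)*(f1+f3-f2) - (y1+y3-y2)*(e1+e3-e2)) - (x3*f3 - y3*e3)) := by
  have h1 : 0 < (x2-x1)^2 + (y2-y1)^2 := by
    by_contra h
    push_neg at h
    have h1a : x2 - x1 = 0 := by nlinarith [sq_nonneg (x2-x1), sq_nonneg (y2-y1)]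
    have h1b : y2 - y1 = 0 := by nlinarith [sq_nonneg (x2-x1), sq_nonneg (y2-y1)]
    rw [h1a, h1b] at hD; nlinarith
  have h2 : 0 < (x3-x2)^2 + (y3-y2)^2 := by
    by_contra h
    push_neg at h
    have h2a : x3 - x2 = 0 := by nlinarith [sq_nonneg (x3-x2), sq_nonneg (y3-y2)]
    have h2b : y3 - y2 = 0 := by nlinarith [sq_nonneg (x3-x2), sq_nonneg (y3-y2)]
    rw [h2a, h2b] at hD; nlinarith
  set a := Real.sqrt ((x2-x1)^2 + (y2-y1)^2) with ha
  set b := Real.sqrt ((x3-x2)^2 + (y3-y2)^2) with hb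
  have hap : 0 < a := Real.sqrt_pos.mpr h1
  have hbp : 0 < b := Real.sqrt_pos.mpr h2
  have hsu : a * a = (x2-x1)^2 + (y2-y1)^2 := Real.mul_self_sqrt h1.le
  have hsw : b * b = (x3-x2)^2 + (y3-y2)^2 := Real.mul_self_sqrt h2.le
  have hD2 : a * b = (x2 - x1) * (y3 - y2) - (y2 - y1) * (x3 - x2) := by
    have h3 : (a * b - ((x2 - x1) * (y3 - y2) - (y2 - y1) * (x3 - x2)))
        * (a * b + ((x2 - x1) * (y3 - y2) - (y2 - y1) * (x3 - x2))) = 0 := by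
      linear_combination (b*b) * hsu + ((x2-x1)^2 + (y2-y1)^2) * hsw
        + ((x2 - x1) * (x3 - x2) + (y2 - y1) * (y3 - y2)) * hO
    rcases mul_eq_zero.mp h3 with h4 | h4
    · linarith
    · nlinarith [mul_pos hap hbp]
  have hane : a ≠ 0 := hap.ne'
  have hbne : b ≠ 0 := hbp.ne'
  field_simp
  linear_combination
      (1*((x2-x1)*(e2-e1)+(y2-y1)*(f2-f1))) * hsw
    - (1*((x3-x2)*(e3-e2)+(y3-y2)*(f3-f2))) * hsu
    - (1*((x2*f2 - y2*e2) - (x1*f1 - y1*e1) +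
        (((x1+x3-x2)*(f1+f3-f2) - (y1+y3-y2)*(e1+e3-e2)) - (x3*f3 - y3*e3)))) * hD2
    + (1*((x3-x2)*(e2-e1)+(y3-y2)*(f2-f1) - (x2-x1)*(e3-e2) - (y2-y1)*(f3-f2))) * hO

/-- Component-wise chain rule for a curve composed with a scalar function. -/
private lemma comp_deriv {γ : ℝ → EuclideanSpace ℝ (Fin 2)} (hγd : Differentiable ℝ γ)
    {s : ℝ → ℝ} {t : ℝ} (hs : DifferentiableAt ℝ s t) (i : Fin 2) :
    HasDerivAt (fun τ => γ (s τ) i) (deriv s t * deriv γ (s t) i) t := by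
  have h1 : HasDerivAt (γ ∘ s) (deriv s t • deriv γ (s t)) t :=
    HasDerivAt.scomp t (hγd (s t)).hasDerivAt hs.hasDerivAt
  have h2 := (EuclideanSpace.proj i).hasFDerivAt.comp_hasDerivAt t h1
  simp [Function.comp] at h2
  exact h2


/-- Sweep theorem, null-arc case: if the path of rectangles degenerates at
both ends to a chord of `γ` (`s₂ = s₃` and `s₄ = s₁ + 1`, so `Y = 0` there),
then the shape loop bounds signed area `0`. -/
theorem stmt7
    (γ : ℝ → EuclideanSpace ℝ (Fin 2)) (hγ : ContDiff ℝ 1 γ)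
    (hper : ∀ s : ℝ, γ (s + 1) = γ s)
    (s₁ s₂ s₃ s₄ : ℝ → ℝ)
    (hc₁ : ContinuousOn s₁ (Set.Icc (0:ℝ) 1)) (hc₂ : ContinuousOn s₂ (Set.Icc (0:ℝ) 1))
    (hc₃ : ContinuousOn s₃ (Set.Icc (0:ℝ) 1)) (hc₄ : ContinuousOn s₄ (Set.Icc (0:ℝ) 1))
    (hd₁ : ∀ t ∈ Set.Ioo (0:ℝ) 1, DifferentiableAt ℝ s₁ t)
    (hd₂ : ∀ t ∈ Set.Ioo (0:ℝ) 1, DifferentiableAt ℝ s₂ t)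
    (hd₃ : ∀ t ∈ Set.Ioo (0:ℝ) 1, DifferentiableAt ℝ s₃ t)
    (hd₄ : ∀ t ∈ Set.Ioo (0:ℝ) 1, DifferentiableAt ℝ s₄ t)
    (hpar : ∀ t ∈ Set.Icc (0:ℝ) 1, γ (s₁ t) + γ (s₃ t) = γ (s₂ t) + γ (s₄ t))
    (hperp : ∀ t ∈ Set.Icc (0:ℝ) 1, inner ℝ (γ (s₂ t) - γ (s₁ t)) (γ (s₄ t) - γ (s₁ t)) = (0 : ℝ))
    (hccw : ∀ t ∈ Set.Ioo (0:ℝ) 1, pdet (γ (s₂ t) - γ (s₁ t)) (γ (s₄ t) - γ (s₁ t)) > 0)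
    (X Y : ℝ → ℝ)
    (hX : X = fun t => ‖γ (s₂ t) - γ (s₁ t)‖)
    (hY : Y = fun t => ‖γ (s₃ t) - γ (s₂ t)‖)
    (hint : IntervalIntegrable (fun t => Y t * deriv X t - X t * deriv Y t)
      MeasureTheory.volume 0 1)
    (h0₂₃ : s₂ 0 = s₃ 0) (h0₄₁ : s₄ 0 = s₁ 0 + 1)
    (h1₂₃ : s₂ 1 = s₃ 1) (h1₄₁ : s₄ 1 = s₁ 1 + 1) :
    ∫ t in (0:ℝ)..1, (Y t * deriv X t - X t * deriv Y t) = 0 := by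
  have hγd : Differentiable ℝ γ := hγ.differentiable one_ne_zero
  have hγ'c : Continuous (deriv γ) := hγ.continuous_deriv le_rfl
  have hproj : ∀ i : Fin 2, Continuous (fun x : EuclideanSpace ℝ (Fin 2) => x i) :=
    fun i => (EuclideanSpace.proj i).continuous
  set q : ℝ → ℝ := fun s => γ s 0 * deriv γ s 1 - γ s 1 * deriv γ s 0 with hqdef
  have hqc : Continuous q :=
    (((hproj 0).comp hγ.continuous).mul ((hproj 1).comp hγ'c)).sub
      (((hproj 1).comp hγ.continuous).mul ((hproj 0).comp hγ'c))
  have hdper : ∀ s, deriv γ (s + 1) = deriv γ s := by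
    intro s
    have h1 : (fun x => γ (x + 1)) = γ := funext hper
    have h2 := deriv_comp_add_const γ 1 s
    rw [h1] at h2
    exact h2.symm
  have hqper : ∀ s, q (s + 1) = q s := by
    intro s; simp only [hqdef]; rw [hper, hdper]
  set Λ : ℝ → ℝ := fun σ => ∫ x in (0:ℝ)..σ, q x with hΛdef
  have hΛd : ∀ σ, HasDerivAt Λ (q σ) σ := by
    intro σ
    rw [hΛdef]
    exact intervalIntegral.integral_hasDerivAt_right (hqc.intervalIntegrable 0 σ)
      (hqc.stronglyMeasurableAtFilter _ _) hqc.continuousAt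
  have hΛc : Continuous Λ := by
    rw [continuous_iff_continuousAt]; exact fun σ => (hΛd σ).continuousAt
  have hΛshift : ∀ σ, Λ (σ + 1) = Λ σ + Λ 1 := by
    intro σ
    have h1 : Λ 1 + (∫ x in (1:ℝ)..(σ+1), q x) = Λ (σ + 1) :=
      intervalIntegral.integral_add_adjacent_intervals
        (hqc.intervalIntegrable _ _) (hqc.intervalIntegrable _ _)
    have h2 : (∫ x in (0:ℝ)..σ, q (x + 1)) = ∫ x in (0+1:ℝ)..(σ+1), q x :=
      intervalIntegral.integral_comp_add_right q 1
    simp only [hqper, zero_add] at h2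
    rw [hΛdef] at h1 ⊢
    simp only at h1 h2 ⊢
    rw [← h1, ← h2]
    ring
  set G : ℝ → ℝ := fun τ => Λ (s₂ τ) - Λ (s₁ τ) + (Λ (s₄ τ) - Λ (s₃ τ)) with hGdef
  have hGc : ContinuousOn G (Set.Icc (0:ℝ) 1) :=
    ((hΛc.comp_continuousOn hc₂).sub (hΛc.comp_continuousOn hc₁)).add
      ((hΛc.comp_continuousOn hc₄).sub (hΛc.comp_continuousOn hc₃))
  have hpar0 : ∀ τ ∈ Set.Icc (0:ℝ) 1,
      γ (s₁ τ) 0 + γ (s₃ τ) 0 = γ (s₂ τ) 0 + γ (s₄ τ) 0 := by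
    intro τ hτ
    have h := congrArg (fun v : EuclideanSpace ℝ (Fin 2) => v 0) (hpar τ hτ)
    simpa using h
  have hpar1 : ∀ τ ∈ Set.Icc (0:ℝ) 1,
      γ (s₁ τ) 1 + γ (s₃ τ) 1 = γ (s₂ τ) 1 + γ (s₄ τ) 1 := by
    intro τ hτ
    have h := congrArg (fun v : EuclideanSpace ℝ (Fin 2) => v 1) (hpar τ hτ)
    simpa using h
  have hGd : ∀ t ∈ Set.Ioo (0:ℝ) 1,
      HasDerivAt G (Y t * deriv X t - X t * deriv Y t) t := by
    intro t ht
    have ht' : t ∈ Set.Icc (0:ℝ) 1 := Set.Ioo_subset_Icc_self ht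
    have hf1 := comp_deriv hγd (hd₁ t ht) 0
    have hg1 := comp_deriv hγd (hd₁ t ht) 1
    have hf2 := comp_deriv hγd (hd₂ t ht) 0
    have hg2 := comp_deriv hγd (hd₂ t ht) 1
    have hf3 := comp_deriv hγd (hd₃ t ht) 0
    have hg3 := comp_deriv hγd (hd₃ t ht) 1
    have hf4 := comp_deriv hγd (hd₄ t ht) 0
    have hg4 := comp_deriv hγd (hd₄ t ht) 1
    -- value relations from the parallelogram law
    have hx4 : γ (s₄ t) 0 = γ (s₁ t) 0 + γ (s₃ t) 0 - γ (s₂ t) 0 := by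
      have := hpar0 t ht'; linarith
    have hy4 : γ (s₄ t) 1 = γ (s₁ t) 1 + γ (s₃ t) 1 - γ (s₂ t) 1 := by
      have := hpar1 t ht'; linarith
    -- derivative relations from the parallelogram law
    have hmem : Set.Ioo (0:ℝ) 1 ∈ nhds t := Ioo_mem_nhds ht.1 ht.2
    have h4a : HasDerivAt (fun τ => γ (s₄ τ) 0)
        (deriv s₁ t * deriv γ (s₁ t) 0 + deriv s₃ t * deriv γ (s₃ t) 0
          - deriv s₂ t * deriv γ (s₂ t) 0) t := by
      have heq : (fun τ => γ (s₄ τ) 0)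
          =ᶠ[nhds t] (fun τ => γ (s₁ τ) 0 + γ (s₃ τ) 0 - γ (s₂ τ) 0) := by
        filter_upwards [hmem] with τ hτ
        have := hpar0 τ (Set.Ioo_subset_Icc_self hτ); linarith
      exact HasDerivAt.congr_of_eventuallyEq ((hf1.add hf3).sub hf2) heq
    have h4b : HasDerivAt (fun τ => γ (s₄ τ) 1)
        (deriv s₁ t * deriv γ (s₁ t) 1 + deriv s₃ t * deriv γ (s₃ t) 1
          - deriv s₂ t * deriv γ (s₂ t) 1) t := by
      have heq : (fun τ => γ (s₄ τ) 1)
          =ᶠ[nhds t] (fun τ => γ (s₁ τ) 1 + γ (s₃ τ) 1 - γ (s₂ τ) 1) := by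
        filter_upwards [hmem] with τ hτ
        have := hpar1 τ (Set.Ioo_subset_Icc_self hτ); linarith
      exact HasDerivAt.congr_of_eventuallyEq ((hg1.add hg3).sub hg2) heq
    have he4 : deriv s₄ t * deriv γ (s₄ t) 0
        = deriv s₁ t * deriv γ (s₁ t) 0 + deriv s₃ t * deriv γ (s₃ t) 0
          - deriv s₂ t * deriv γ (s₂ t) 0 := hf4.unique h4a
    have hf4' : deriv s₄ t * deriv γ (s₄ t) 1
        = deriv s₁ t * deriv γ (s₁ t) 1 + deriv s₃ t * deriv γ (s₃ t) 1
          - deriv s₂ t * deriv γ (s₂ t) 1 := hg4.unique h4b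
    -- orientation and orthogonality at t
    have hDpos0 : 0 < (γ (s₂ t) 0 - γ (s₁ t) 0) * (γ (s₄ t) 1 - γ (s₁ t) 1)
        - (γ (s₂ t) 1 - γ (s₁ t) 1) * (γ (s₄ t) 0 - γ (s₁ t) 0) := by
      have h := hccw t ht
      simpa [pdet] using h
    have hO0 : (γ (s₂ t) 0 - γ (s₁ t) 0) * (γ (s₄ t) 0 - γ (s₁ t) 0)
        + (γ (s₂ t) 1 - γ (s₁ t) 1) * (γ (s₄ t) 1 - γ (s₁ t) 1) = 0 := by
      have h := hperp t ht'
      simp [PiLp.inner_apply, Fin.sum_univ_two, RCLike.inner_apply, conj_trivial] at h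
      linarith
    have hDpos : 0 < (γ (s₂ t) 0 - γ (s₁ t) 0) * (γ (s₃ t) 1 - γ (s₂ t) 1)
        - (γ (s₂ t) 1 - γ (s₁ t) 1) * (γ (s₃ t) 0 - γ (s₂ t) 0) := by
      rw [hx4, hy4] at hDpos0; convert hDpos0 using 2 <;> ring
    have hO : (γ (s₂ t) 0 - γ (s₁ t) 0) * (γ (s₃ t) 0 - γ (s₂ t) 0)
        + (γ (s₂ t) 1 - γ (s₁ t) 1) * (γ (s₃ t) 1 - γ (s₂ t) 1) = 0 := by
      rw [hx4, hy4] at hO0; linear_combination hO0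
    -- derivative of X
    have hXeq : X = fun τ => Real.sqrt ((γ (s₂ τ) 0 - γ (s₁ τ) 0)^2
        + (γ (s₂ τ) 1 - γ (s₁ τ) 1)^2) := by
      rw [hX]
      funext τ
      rw [EuclideanSpace.norm_eq]
      congr 1
      simp [Fin.sum_univ_two, sq_abs]
    have hYeq : Y = fun τ => Real.sqrt ((γ (s₃ τ) 0 - γ (s₂ τ) 0)^2
        + (γ (s₃ τ) 1 - γ (s₂ τ) 1)^2) := by
      rw [hY]
      funext τ
      rw [EuclideanSpace.norm_eq]
      congr 1
      simp [Fin.sum_univ_two, sq_abs]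
    have hSu_pos : 0 < (γ (s₂ t) 0 - γ (s₁ t) 0)^2 + (γ (s₂ t) 1 - γ (s₁ t) 1)^2 := by
      by_contra h
      push_neg at h
      have h1a : γ (s₂ t) 0 - γ (s₁ t) 0 = 0 := by
        nlinarith [sq_nonneg (γ (s₂ t) 0 - γ (s₁ t) 0), sq_nonneg (γ (s₂ t) 1 - γ (s₁ t) 1)]
      have h1b : γ (s₂ t) 1 - γ (s₁ t) 1 = 0 := by
        nlinarith [sq_nonneg (γ (s₂ t) 0 - γ (s₁ t) 0), sq_nonneg (γ (s₂ t) 1 - γ (s₁ t) 1)]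
      rw [h1a, h1b] at hDpos; nlinarith
    have hSw_pos : 0 < (γ (s₃ t) 0 - γ (s₂ t) 0)^2 + (γ (s₃ t) 1 - γ (s₂ t) 1)^2 := by
      by_contra h
      push_neg at h
      have h1a : γ (s₃ t) 0 - γ (s₂ t) 0 = 0 := by
        nlinarith [sq_nonneg (γ (s₃ t) 0 - γ (s₂ t) 0), sq_nonneg (γ (s₃ t) 1 - γ (s₂ t) 1)]
      have h1b : γ (s₃ t) 1 - γ (s₂ t) 1 = 0 := by
        nlinarith [sq_nonneg (γ (s₃ t) 0 - γ (s₂ t) 0), sq_nonneg (γ (s₃ t) 1 - γ (s₂ t) 1)]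
      rw [h1a, h1b] at hDpos; nlinarith
    have hSX : HasDerivAt (fun τ => (γ (s₂ τ) 0 - γ (s₁ τ) 0)^2
        + (γ (s₂ τ) 1 - γ (s₁ τ) 1)^2)
        (2*(γ (s₂ t) 0 - γ (s₁ t) 0)*(deriv s₂ t * deriv γ (s₂ t) 0
            - deriv s₁ t * deriv γ (s₁ t) 0)
          + 2*(γ (s₂ t) 1 - γ (s₁ t) 1)*(deriv s₂ t * deriv γ (s₂ t) 1
            - deriv s₁ t * deriv γ (s₁ t) 1)) t := by
      have h := ((hf2.sub hf1).pow 2).add ((hg2.sub hg1).pow 2)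
      refine h.congr_deriv ?_
      norm_num
    have hSY : HasDerivAt (fun τ => (γ (s₃ τ) 0 - γ (s₂ τ) 0)^2
        + (γ (s₃ τ) 1 - γ (s₂ τ) 1)^2)
        (2*(γ (s₃ t) 0 - γ (s₂ t) 0)*(deriv s₃ t * deriv γ (s₃ t) 0
            - deriv s₂ t * deriv γ (s₂ t) 0)
          + 2*(γ (s₃ t) 1 - γ (s₂ t) 1)*(deriv s₃ t * deriv γ (s₃ t) 1
            - deriv s₂ t * deriv γ (s₂ t) 1)) t := by
      have h := ((hf3.sub hf2).pow 2).add ((hg3.sub hg2).pow 2)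
      refine h.congr_deriv ?_
      norm_num
    have hXd : HasDerivAt X
        (1 / (2 * Real.sqrt ((γ (s₂ t) 0 - γ (s₁ t) 0)^2 + (γ (s₂ t) 1 - γ (s₁ t) 1)^2))
          * (2*(γ (s₂ t) 0 - γ (s₁ t) 0)*(deriv s₂ t * deriv γ (s₂ t) 0
              - deriv s₁ t * deriv γ (s₁ t) 0)
            + 2*(γ (s₂ t) 1 - γ (s₁ t) 1)*(deriv s₂ t * deriv γ (s₂ t) 1
              - deriv s₁ t * deriv γ (s₁ t) 1))) t := by
      rw [hXeq]
      exact (Real.hasDerivAt_sqrt hSu_pos.ne').comp t hSX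
    have hYd : HasDerivAt Y
        (1 / (2 * Real.sqrt ((γ (s₃ t) 0 - γ (s₂ t) 0)^2 + (γ (s₃ t) 1 - γ (s₂ t) 1)^2))
          * (2*(γ (s₃ t) 0 - γ (s₂ t) 0)*(deriv s₃ t * deriv γ (s₃ t) 0
              - deriv s₂ t * deriv γ (s₂ t) 0)
            + 2*(γ (s₃ t) 1 - γ (s₂ t) 1)*(deriv s₃ t * deriv γ (s₃ t) 1
              - deriv s₂ t * deriv γ (s₂ t) 1))) t := by
      rw [hYeq]
      exact (Real.hasDerivAt_sqrt hSw_pos.ne').comp t hSY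
    -- derivative of G
    have hL1 : HasDerivAt (fun τ => Λ (s₁ τ)) (q (s₁ t) * deriv s₁ t) t :=
      (hΛd (s₁ t)).comp t (hd₁ t ht).hasDerivAt
    have hL2 : HasDerivAt (fun τ => Λ (s₂ τ)) (q (s₂ t) * deriv s₂ t) t :=
      (hΛd (s₂ t)).comp t (hd₂ t ht).hasDerivAt
    have hL3 : HasDerivAt (fun τ => Λ (s₃ τ)) (q (s₃ t) * deriv s₃ t) t :=
      (hΛd (s₃ t)).comp t (hd₃ t ht).hasDerivAt
    have hL4 : HasDerivAt (fun τ => Λ (s₄ τ)) (q (s₄ t) * deriv s₄ t) t :=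
      (hΛd (s₄ t)).comp t (hd₄ t ht).hasDerivAt
    have hGd0 : HasDerivAt G
        (q (s₂ t) * deriv s₂ t - q (s₁ t) * deriv s₁ t
          + (q (s₄ t) * deriv s₄ t - q (s₃ t) * deriv s₃ t)) t := by
      rw [hGdef]
      exact (hL2.sub hL1).add (hL4.sub hL3)
    rw [hXd.deriv, hYd.deriv, hYeq, hXeq]
    simp only
    convert hGd0 using 1
    have hq4 : q (s₄ t) * deriv s₄ t
        = (γ (s₁ t) 0 + γ (s₃ t) 0 - γ (s₂ t) 0)
            * (deriv s₁ t * deriv γ (s₁ t) 1 + deriv s₃ t * deriv γ (s₃ t) 1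
              - deriv s₂ t * deriv γ (s₂ t) 1)
          - (γ (s₁ t) 1 + γ (s₃ t) 1 - γ (s₂ t) 1)
            * (deriv s₁ t * deriv γ (s₁ t) 0 + deriv s₃ t * deriv γ (s₃ t) 0
              - deriv s₂ t * deriv γ (s₂ t) 0) := by
      simp only [hqdef]
      rw [hx4, hy4]
      linear_combination (γ (s₁ t) 0 + γ (s₃ t) 0 - γ (s₂ t) 0) * hf4'
        - (γ (s₁ t) 1 + γ (s₃ t) 1 - γ (s₂ t) 1) * he4
    rw [hq4]
    simp only [hqdef]
    have hkey := key_identity (γ (s₁ t) 0) (γ (s₁ t) 1) (γ (s₂ t) 0) (γ (s₂ t) 1)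
      (γ (s₃ t) 0) (γ (s₃ t) 1)
      (deriv s₁ t * deriv γ (s₁ t) 0) (deriv s₁ t * deriv γ (s₁ t) 1)
      (deriv s₂ t * deriv γ (s₂ t) 0) (deriv s₂ t * deriv γ (s₂ t) 1)
      (deriv s₃ t * deriv γ (s₃ t) 0) (deriv s₃ t * deriv γ (s₃ t) 1)
      hO hDpos
    linear_combination hkey
  have hG0 : G 0 = Λ 1 := by
    rw [hGdef]
    simp only
    rw [h0₂₃, h0₄₁, hΛshift (s₁ 0)]
    ring
  have hG1 : G 1 = Λ 1 := by
    rw [hGdef]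
    simp only
    rw [h1₂₃, h1₄₁, hΛshift (s₁ 1)]
    ring
  have hFTC := intervalIntegral.integral_eq_sub_of_hasDerivAt_of_le
    (f := G) (f' := fun t => Y t * deriv X t - X t * deriv Y t)
    (by norm_num : (0:ℝ) ≤ 1) hGc hGd hint
  rw [hFTC, hG1, hG0, sub_self]
end
end

section
/- (Sweep theorem, hyperbolic-arc case.) Suppose s₁, s₂, s₃, s₄ : [0,1] → ℝ are continuous on [0,1] and differentiable on (0,1), satisfy the parallelogram and right-angle conditions p₁(t) + p₃(t) = p₂(t) + p₄(t) and ⟨p₂(t) − p₁(t), p₄(t) − p₁(t)⟩ = 0 for all t ∈ [0,1], and trace rectangles gracing γ on (0,1); suppose t ↦ Y(t) X′(t) − X(t) Y′(t) is integrable on [0,1]. If at t = 0 one has s₁(0) = s₂(0) and s₃(0) = s₄(0) (degenerate rectangle with X(0) = 0), and at t = 1 one has s₂(1) = s₃(1) and s₄(1) = s₁(1) + 1 (degenerate rectangle with Y(1) = 0), then ∫₀¹ (Y(t) X′(t) − X(t) Y′(t)) dt = ∫₀¹ det(γ(s), γ′(s)) ds; that is, the shape loop of a hyperbolic arc bounds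 (up to sign) the same area as the region bounded by γ. -/
noncomputable section

open MeasureTheory Set

lemma pdet_smul_right (u v : EuclideanSpace ℝ (Fin 2)) (r : ℝ) :
    pdet u (r • v) = r * pdet u v := by
  simp [pdet, PiLp.smul_apply, smul_eq_mul]; ring

/-- Derivative of the norm of a curve in a real inner product space. -/
lemma hasDerivAt_norm_comp {E : Type*} [NormedAddCommGroup E] [InnerProductSpace ℝ E]
    {w : ℝ → E} {w' : E} {t : ℝ} (hw : HasDerivAt w w' t) (h0 : w t ≠ 0) :
    HasDerivAt (fun τ => ‖w τ‖) ((inner ℝ (w t) w' : ℝ) / ‖w t‖) t := by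
  have hnn : (0:ℝ) < ‖w t‖ := norm_pos_iff.mpr h0
  have hne : (inner ℝ (w t) (w t) : ℝ) ≠ 0 := by
    rw [real_inner_self_eq_norm_sq]; positivity
  have hi : HasDerivAt (fun τ => (inner ℝ (w τ) (w τ) : ℝ))
      ((inner ℝ (w t) w' : ℝ) + (inner ℝ w' (w t) : ℝ)) t := hw.inner ℝ hw
  have hs := (Real.hasDerivAt_sqrt hne).comp t hi
  have heq : (fun τ => Real.sqrt (inner ℝ (w τ) (w τ) : ℝ)) = fun τ => ‖w τ‖ := by
    funext τ
    rw [real_inner_self_eq_norm_mul_norm, Real.sqrt_mul_self (norm_nonneg _)]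
  have hsq : Real.sqrt (inner ℝ (w t) (w t) : ℝ) = ‖w t‖ := by
    rw [real_inner_self_eq_norm_mul_norm, Real.sqrt_mul_self (norm_nonneg _)]
  simp only [Function.comp_def] at hs
  rw [heq] at hs
  refine hs.congr_deriv ?_
  rw [hsq, real_inner_comm w' (w t)]
  field_simp
  ring

/-- The key pointwise algebraic identity for rectangles. -/
lemma key_vec (a b c d a' b' c' d' : EuclideanSpace ℝ (Fin 2))
    (hpar : a + c = b + d) (hpar' : a' + c' = b' + d')
    (hperp : (inner ℝ (b - a) (d - a) : ℝ) = 0)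
    (hccw : 0 < pdet (b - a) (d - a)) :
    ‖c - b‖ * ((inner ℝ (b - a) (b' - a') : ℝ) / ‖b - a‖)
      - ‖b - a‖ * ((inner ℝ (c - b) (c' - b') : ℝ) / ‖c - b‖)
    = pdet b b' - pdet a a' + (pdet d d' - pdet c c') := by
  have hcb : c - b = d - a := by
    rw [sub_eq_sub_iff_add_eq_add, add_comm c a, add_comm d b]; exact hpar
  have hcb' : c' - b' = d' - a' := by
    rw [sub_eq_sub_iff_add_eq_add, add_comm c' a', add_comm d' b']; exact hpar'
  rw [hcb, hcb']
  -- coordinates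
  have hcoord : ∀ (x y : EuclideanSpace ℝ (Fin 2)) (i : Fin 2), (x - y) i = x i - y i := by
    intro x y i; simp
  have hinner : ∀ (x y : EuclideanSpace ℝ (Fin 2)),
      (inner ℝ x y : ℝ) = x 0 * y 0 + x 1 * y 1 := by
    intro x y
    simp [PiLp.inner_apply, RCLike.inner_apply, Fin.sum_univ_two, conj_trivial]; ring
  have hnormsq : ∀ x : EuclideanSpace ℝ (Fin 2), ‖x‖ ^ 2 = x 0 ^ 2 + x 1 ^ 2 := by
    intro x
    rw [← real_inner_self_eq_norm_sq, hinner]; ring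
  have hune : b - a ≠ 0 := by
    intro h
    rw [h] at hccw
    simp [pdet] at hccw
  have hvne : d - a ≠ 0 := by
    intro h
    rw [h] at hccw
    simp [pdet] at hccw
  have hx : (0:ℝ) < ‖b - a‖ := norm_pos_iff.mpr hune
  have hy : (0:ℝ) < ‖d - a‖ := norm_pos_iff.mpr hvne
  have hperp' : (b 0 - a 0) * (d 0 - a 0) + (b 1 - a 1) * (d 1 - a 1) = 0 := by
    rw [hinner] at hperp
    simpa [hcoord] using hperp
  have hccw' : 0 < (b 0 - a 0) * (d 1 - a 1) - (b 1 - a 1) * (d 0 - a 0) := by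
    simpa [pdet, hcoord] using hccw
  have hx2 : ‖b - a‖ ^ 2 = (b 0 - a 0) ^ 2 + (b 1 - a 1) ^ 2 := by
    rw [hnormsq]; simp [hcoord]
  have hy2 : ‖d - a‖ ^ 2 = (d 0 - a 0) ^ 2 + (d 1 - a 1) ^ 2 := by
    rw [hnormsq]; simp [hcoord]
  -- product of norms equals the determinant
  have hdet : ‖b - a‖ * ‖d - a‖ = (b 0 - a 0) * (d 1 - a 1) - (b 1 - a 1) * (d 0 - a 0) := by
    have h2 : (‖b - a‖ * ‖d - a‖ - ((b 0 - a 0) * (d 1 - a 1) - (b 1 - a 1) * (d 0 - a 0)))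
        * (‖b - a‖ * ‖d - a‖ + ((b 0 - a 0) * (d 1 - a 1) - (b 1 - a 1) * (d 0 - a 0))) = 0 := by
      have hsq : (‖b - a‖ * ‖d - a‖) ^ 2
          = ((b 0 - a 0) * (d 1 - a 1) - (b 1 - a 1) * (d 0 - a 0)) ^ 2 := by
        rw [mul_pow, hx2, hy2]
        linear_combination ((b 0 - a 0) * (d 0 - a 0) + (b 1 - a 1) * (d 1 - a 1)) * hperp'
      linear_combination hsq
    rcases mul_eq_zero.mp h2 with h | h
    · linarith
    · nlinarith [mul_pos hx hy]
  -- coordinate equations for c, c'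
  have hc0 : c 0 = b 0 + d 0 - a 0 := by
    have := congrArg (fun v : EuclideanSpace ℝ (Fin 2) => v 0) hpar
    simp only [PiLp.add_apply] at this
    linarith
  have hc1 : c 1 = b 1 + d 1 - a 1 := by
    have := congrArg (fun v : EuclideanSpace ℝ (Fin 2) => v 1) hpar
    simp only [PiLp.add_apply] at this
    linarith
  have hc0' : c' 0 = b' 0 + d' 0 - a' 0 := by
    have := congrArg (fun v : EuclideanSpace ℝ (Fin 2) => v 0) hpar'
    simp only [PiLp.add_apply] at this
    linarith
  have hc1' : c' 1 = b' 1 + d' 1 - a' 1 := by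
    have := congrArg (fun v : EuclideanSpace ℝ (Fin 2) => v 1) hpar'
    simp only [PiLp.add_apply] at this
    linarith
  have hP : (inner ℝ (b - a) (b' - a') : ℝ)
      = (b 0 - a 0) * (b' 0 - a' 0) + (b 1 - a 1) * (b' 1 - a' 1) := by
    rw [hinner]; simp [hcoord]
  have hQ : (inner ℝ (d - a) (d' - a') : ℝ)
      = (d 0 - a 0) * (d' 0 - a' 0) + (d 1 - a 1) * (d' 1 - a' 1) := by
    rw [hinner]; simp [hcoord]
  have main : ‖d - a‖ ^ 2 * ((b 0 - a 0) * (b' 0 - a' 0) + (b 1 - a 1) * (b' 1 - a' 1))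
      - ‖b - a‖ ^ 2 * ((d 0 - a 0) * (d' 0 - a' 0) + (d 1 - a 1) * (d' 1 - a' 1))
      = (‖b - a‖ * ‖d - a‖)
        * ((b 0 * b' 1 - b 1 * b' 0) - (a 0 * a' 1 - a 1 * a' 0)
          + ((d 0 * d' 1 - d 1 * d' 0) - (c 0 * c' 1 - c 1 * c' 0))) := by
    rw [hx2, hy2, hdet, hc0, hc1, hc0', hc1']
    linear_combination ((b' 0 - a' 0) * (d 0 - a 0) + (b' 1 - a' 1) * (d 1 - a 1)
      - (b 0 - a 0) * (d' 0 - a' 0) - (b 1 - a 1) * (d' 1 - a' 1)) * hperp'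
  rw [hP, hQ]
  show _ = (b 0 * b' 1 - b 1 * b' 0) - (a 0 * a' 1 - a 1 * a' 0)
      + ((d 0 * d' 1 - d 1 * d' 0) - (c 0 * c' 1 - c 1 * c' 0))
  field_simp
  linear_combination main

/-- Sweep theorem, hyperbolic-arc case: if the path of rectangles degenerates
at `t = 0` with `X(0) = 0` (`s₁ = s₂`, `s₃ = s₄`) and at `t = 1` with
`Y(1) = 0` (`s₂ = s₃`, `s₄ = s₁ + 1`), then the shape loop bounds (up to sign)
the same area as the region bounded by `γ`:
`∫₀¹ (Y X′ − X Y′) dt = ∫₀¹ det(γ, γ′) ds`. -/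
theorem stmt8
    (γ : ℝ → EuclideanSpace ℝ (Fin 2)) (hγ : ContDiff ℝ 1 γ)
    (hper : ∀ s : ℝ, γ (s + 1) = γ s)
    (s₁ s₂ s₃ s₄ : ℝ → ℝ)
    (hc₁ : ContinuousOn s₁ (Set.Icc (0:ℝ) 1)) (hc₂ : ContinuousOn s₂ (Set.Icc (0:ℝ) 1))
    (hc₃ : ContinuousOn s₃ (Set.Icc (0:ℝ) 1)) (hc₄ : ContinuousOn s₄ (Set.Icc (0:ℝ) 1))
    (hd₁ : ∀ t ∈ Set.Ioo (0:ℝ) 1, DifferentiableAt ℝ s₁ t)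
    (hd₂ : ∀ t ∈ Set.Ioo (0:ℝ) 1, DifferentiableAt ℝ s₂ t)
    (hd₃ : ∀ t ∈ Set.Ioo (0:ℝ) 1, DifferentiableAt ℝ s₃ t)
    (hd₄ : ∀ t ∈ Set.Ioo (0:ℝ) 1, DifferentiableAt ℝ s₄ t)
    (hpar : ∀ t ∈ Set.Icc (0:ℝ) 1, γ (s₁ t) + γ (s₃ t) = γ (s₂ t) + γ (s₄ t))
    (hperp : ∀ t ∈ Set.Icc (0:ℝ) 1, inner ℝ (γ (s₂ t) - γ (s₁ t)) (γ (s₄ t) - γ (s₁ t)) = (0 : ℝ))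
    (hccw : ∀ t ∈ Set.Ioo (0:ℝ) 1, pdet (γ (s₂ t) - γ (s₁ t)) (γ (s₄ t) - γ (s₁ t)) > 0)
    (X Y : ℝ → ℝ)
    (hX : X = fun t => ‖γ (s₂ t) - γ (s₁ t)‖)
    (hY : Y = fun t => ‖γ (s₃ t) - γ (s₂ t)‖)
    (hint : IntervalIntegrable (fun t => Y t * deriv X t - X t * deriv Y t)
      MeasureTheory.volume 0 1)
    (h0₁₂ : s₁ 0 = s₂ 0) (h0₃₄ : s₃ 0 = s₄ 0)
    (h1₂₃ : s₂ 1 = s₃ 1) (h1₄₁ : s₄ 1 = s₁ 1 + 1) :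
    ∫ t in (0:ℝ)..1, (Y t * deriv X t - X t * deriv Y t)
      = ∫ s in (0:ℝ)..1, pdet (γ s) (deriv γ s) := by
  have hγd : Differentiable ℝ γ := hγ.differentiable one_ne_zero
  have hγ' : Continuous (deriv γ) := hγ.continuous_deriv le_rfl
  set φ : ℝ → ℝ := fun s => pdet (γ s) (deriv γ s) with hφ
  have hφc : Continuous φ := by
    apply Continuous.sub
    · exact (((EuclideanSpace.proj (0 : Fin 2)).continuous.comp hγd.continuous).mul
        ((EuclideanSpace.proj (1 : Fin 2)).continuous.comp hγ'))
    · exact (((EuclideanSpace.proj (1 : Fin 2)).continuous.comp hγd.continuous).mul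
        ((EuclideanSpace.proj (0 : Fin 2)).continuous.comp hγ'))
  have hγper : Function.Periodic γ 1 := hper
  have hφper : Function.Periodic φ 1 := by
    intro s
    have hdγ : deriv γ (s + 1) = deriv γ s := by
      have h1 : (fun x => γ (x + 1)) = γ := funext hper
      conv_rhs => rw [← h1]
      rw [deriv_comp_add_const]
    simp only [hφ, hper, hdγ]
  set F : ℝ → ℝ := fun z => ∫ x in (0:ℝ)..z, φ x with hFdef
  have hF : ∀ z, HasDerivAt F (φ z) z := fun z =>
    (hφc.integral_hasStrictDerivAt 0 z).hasDerivAt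
  have hFc : Continuous F := by
    have : Differentiable ℝ F := fun z => (hF z).differentiableAt
    exact this.continuous
  set G : ℝ → ℝ := fun t => F (s₂ t) - F (s₁ t) + (F (s₄ t) - F (s₃ t)) with hGdef
  have hGc : ContinuousOn G (Icc 0 1) :=
    (((hFc.comp_continuousOn hc₂).sub (hFc.comp_continuousOn hc₁)).add
      ((hFc.comp_continuousOn hc₄).sub (hFc.comp_continuousOn hc₃)))
  have hGd : ∀ t ∈ Ioo (0:ℝ) 1,
      HasDerivAt G (Y t * deriv X t - X t * deriv Y t) t := by
    intro t ht
    have ht' : t ∈ Icc (0:ℝ) 1 := Ioo_subset_Icc_self ht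
    -- derivatives of the corner curves
    have hp1 : HasDerivAt (fun τ => γ (s₁ τ)) (deriv s₁ t • deriv γ (s₁ t)) t :=
      (hγd (s₁ t)).hasDerivAt.scomp t (hd₁ t ht).hasDerivAt
    have hp2 : HasDerivAt (fun τ => γ (s₂ τ)) (deriv s₂ t • deriv γ (s₂ t)) t :=
      (hγd (s₂ t)).hasDerivAt.scomp t (hd₂ t ht).hasDerivAt
    have hp3 : HasDerivAt (fun τ => γ (s₃ τ)) (deriv s₃ t • deriv γ (s₃ t)) t :=
      (hγd (s₃ t)).hasDerivAt.scomp t (hd₃ t ht).hasDerivAt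
    have hp4 : HasDerivAt (fun τ => γ (s₄ τ)) (deriv s₄ t • deriv γ (s₄ t)) t :=
      (hγd (s₄ t)).hasDerivAt.scomp t (hd₄ t ht).hasDerivAt
    set a := γ (s₁ t); set b := γ (s₂ t); set c := γ (s₃ t); set d := γ (s₄ t)
    set a' := deriv s₁ t • deriv γ (s₁ t)
    set b' := deriv s₂ t • deriv γ (s₂ t)
    set c' := deriv s₃ t • deriv γ (s₃ t)
    set d' := deriv s₄ t • deriv γ (s₄ t)
    -- derivative of the parallelogram relation
    have hq : HasDerivAt (fun τ => γ (s₁ τ) + γ (s₃ τ) - (γ (s₂ τ) + γ (s₄ τ)))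
        (a' + c' - (b' + d')) t := (hp1.add hp3).sub (hp2.add hp4)
    have hq0 : HasDerivAt (fun τ => γ (s₁ τ) + γ (s₃ τ) - (γ (s₂ τ) + γ (s₄ τ)))
        (0 : EuclideanSpace ℝ (Fin 2)) t := by
      have hev : (fun τ => γ (s₁ τ) + γ (s₃ τ) - (γ (s₂ τ) + γ (s₄ τ)))
          =ᶠ[nhds t] (fun _ => (0 : EuclideanSpace ℝ (Fin 2))) := by
        filter_upwards [Ioo_mem_nhds ht.1 ht.2] with τ hτ
        rw [sub_eq_zero]
        exact hpar τ (Ioo_subset_Icc_self hτ)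
      exact (hasDerivAt_const t (0 : EuclideanSpace ℝ (Fin 2))).congr_of_eventuallyEq hev
    have hpar' : a' + c' = b' + d' := by
      have := hq.unique hq0
      rwa [sub_eq_zero] at this
    have hpart : a + c = b + d := hpar t ht'
    have hperpt : (inner ℝ (b - a) (d - a) : ℝ) = 0 := hperp t ht'
    have hccwt : 0 < pdet (b - a) (d - a) := hccw t ht
    have hune : b - a ≠ 0 := by
      intro h; rw [h] at hccwt; simp [pdet] at hccwt
    have hwne : c - b ≠ 0 := by
      have hcb : c - b = d - a := by
        rw [sub_eq_sub_iff_add_eq_add, add_comm c a, add_comm d b]; exact hpart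
      rw [hcb]
      intro h; rw [h] at hccwt; simp [pdet] at hccwt
    -- derivatives of X and Y
    have hu : HasDerivAt (fun τ => γ (s₂ τ) - γ (s₁ τ)) (b' - a') t := hp2.sub hp1
    have hw : HasDerivAt (fun τ => γ (s₃ τ) - γ (s₂ τ)) (c' - b') t := hp3.sub hp2
    have hdX : deriv X t = (inner ℝ (b - a) (b' - a') : ℝ) / ‖b - a‖ := by
      rw [hX]
      exact (hasDerivAt_norm_comp hu hune).deriv
    have hdY : deriv Y t = (inner ℝ (c - b) (c' - b') : ℝ) / ‖c - b‖ := by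
      rw [hY]
      exact (hasDerivAt_norm_comp hw hwne).deriv
    have hXt : X t = ‖b - a‖ := by rw [hX]
    have hYt : Y t = ‖c - b‖ := by rw [hY]
    -- derivative of G
    have hG2 : HasDerivAt G (φ (s₂ t) * deriv s₂ t - φ (s₁ t) * deriv s₁ t
        + (φ (s₄ t) * deriv s₄ t - φ (s₃ t) * deriv s₃ t)) t := by
      exact (((hF (s₂ t)).comp t (hd₂ t ht).hasDerivAt).sub
        ((hF (s₁ t)).comp t (hd₁ t ht).hasDerivAt)).add
        (((hF (s₄ t)).comp t (hd₄ t ht).hasDerivAt).sub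
          ((hF (s₃ t)).comp t (hd₃ t ht).hasDerivAt))
    have hval : Y t * deriv X t - X t * deriv Y t
        = φ (s₂ t) * deriv s₂ t - φ (s₁ t) * deriv s₁ t
          + (φ (s₄ t) * deriv s₄ t - φ (s₃ t) * deriv s₃ t) := by
      rw [hdX, hdY, hXt, hYt]
      have hkey := key_vec a b c d a' b' c' d' hpart hpar' hperpt hccwt
      rw [hkey]
      have e1 : pdet a a' = φ (s₁ t) * deriv s₁ t := by
        rw [pdet_smul_right]; ring
      have e2 : pdet b b' = φ (s₂ t) * deriv s₂ t := by
        rw [pdet_smul_right]; ring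
      have e3 : pdet c c' = φ (s₃ t) * deriv s₃ t := by
        rw [pdet_smul_right]; ring
      have e4 : pdet d d' = φ (s₄ t) * deriv s₄ t := by
        rw [pdet_smul_right]; ring
      rw [e1, e2, e3, e4]
    rw [hval]
    exact hG2
  -- FTC
  have hFTC : ∫ t in (0:ℝ)..1, (Y t * deriv X t - X t * deriv Y t) = G 1 - G 0 := by
    apply intervalIntegral.integral_eq_sub_of_hasDeriv_right_of_le zero_le_one hGc
      (fun t ht => (hGd t ht).hasDerivWithinAt) hint
  rw [hFTC]
  -- endpoint evaluation
  have hG0 : G 0 = 0 := by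
    simp only [hGdef, h0₁₂, h0₃₄]
    ring
  have hG1 : G 1 = F (s₁ 1 + 1) - F (s₁ 1) := by
    simp only [hGdef, h1₂₃, h1₄₁]
    ring
  rw [hG0, hG1]
  have hφint : ∀ u v : ℝ, IntervalIntegrable φ volume u v := fun u v =>
    hφc.intervalIntegrable u v
  have hadd : F (s₁ 1) + ∫ x in (s₁ 1)..(s₁ 1 + 1), φ x = F (s₁ 1 + 1) :=
    intervalIntegral.integral_add_adjacent_intervals (hφint 0 (s₁ 1)) (hφint (s₁ 1) (s₁ 1 + 1))
  have hshift : ∫ x in (s₁ 1)..(s₁ 1 + 1), φ x = ∫ x in (0:ℝ)..(0+1), φ x :=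
    hφper.intervalIntegral_add_eq (s₁ 1) 0
  rw [← hadd, hshift]
  norm_num
end
end

section
/- (Area decomposition.) Suppose s₁, s₂, s₃, s₄ : I → ℝ trace rectangles gracing γ. Then for every t ∈ I, A₁(t) + A₂(t) + A₃(t) + A₄(t) + X(t)·Y(t) = (1/2)∫_{s₁(t)}^{s₁(t)+1} det(γ(s), γ′(s)) ds; that is, the four signed areas between the sides of the rectangle and the corresponding arcs of γ, together with the area of the rectangle itself, add up to the total signed area enclosed by γ. -/
noncomputable section

lemma key_xy (a0 a1 b0 b1 : ℝ) (hperp : a0*b0 + a1*b1 = 0) (hpos : a0*b1 - a1*b0 > 0) :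
    Real.sqrt (a0^2+a1^2) * Real.sqrt (b0^2+b1^2) = a0*b1 - a1*b0 := by
  rw [← Real.sqrt_mul (by positivity)]
  have h : (a0^2+a1^2) * (b0^2+b1^2) = (a0*b1 - a1*b0)^2 := by
    linear_combination (a0*b0 + a1*b1) * hperp
  rw [h, Real.sqrt_sq hpos.le]

/-- Area decomposition: the four signed areas between the sides of the
gracing rectangle and the corresponding arcs of `γ`, plus the area `X·Y` of
the rectangle, add up to the total signed area enclosed by `γ`. -/
theorem stmt9
    (γ : ℝ → EuclideanSpace ℝ (Fin 2)) (hγ : ContDiff ℝ 1 γ)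
    (hper : ∀ s : ℝ, γ (s + 1) = γ s)
    (s₁ s₂ s₃ s₄ : ℝ → ℝ)
    (I : Set ℝ) (hI : I.OrdConnected)
    (hpar : ∀ t ∈ I, γ (s₁ t) + γ (s₃ t) = γ (s₂ t) + γ (s₄ t))
    (hperp : ∀ t ∈ I, inner ℝ (γ (s₂ t) - γ (s₁ t)) (γ (s₄ t) - γ (s₁ t)) = (0 : ℝ))
    (hccw : ∀ t ∈ I, pdet (γ (s₂ t) - γ (s₁ t)) (γ (s₄ t) - γ (s₁ t)) > 0)
    (X Y : ℝ → ℝ)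
    (hX : X = fun t => ‖γ (s₂ t) - γ (s₁ t)‖)
    (hY : Y = fun t => ‖γ (s₃ t) - γ (s₂ t)‖)
    (A₁ A₂ A₃ A₄ : ℝ → ℝ)
    (hA₁ : A₁ = fun t => (1/2) * (∫ s in (s₁ t)..(s₂ t), pdet (γ s) (deriv γ s))
        + (1/2) * pdet (γ (s₂ t)) (γ (s₁ t)))
    (hA₂ : A₂ = fun t => (1/2) * (∫ s in (s₂ t)..(s₃ t), pdet (γ s) (deriv γ s))
        + (1/2) * pdet (γ (s₃ t)) (γ (s₂ t)))
    (hA₃ : A₃ = fun t => (1/2) * (∫ s in (s₃ t)..(s₄ t), pdet (γ s) (deriv γ s))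
        + (1/2) * pdet (γ (s₄ t)) (γ (s₃ t)))
    (hA₄ : A₄ = fun t => (1/2) * (∫ s in (s₄ t)..(s₁ t + 1), pdet (γ s) (deriv γ s))
        + (1/2) * pdet (γ (s₁ t + 1)) (γ (s₄ t)))
:
    ∀ t ∈ I, A₁ t + A₂ t + A₃ t + A₄ t + X t * Y t
      = (1/2) * ∫ s in (s₁ t)..(s₁ t + 1), pdet (γ s) (deriv γ s) := by
  intro t ht
  -- continuity of the integrand
  have h1 : Continuous γ := hγ.continuous
  have h2 : Continuous (deriv γ) := hγ.continuous_deriv le_rfl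
  have hcont : Continuous (fun s => pdet (γ s) (deriv γ s)) := by
    unfold pdet
    exact (((PiLp.continuous_apply 2 _ 0).comp h1).mul ((PiLp.continuous_apply 2 _ 1).comp h2)).sub
      (((PiLp.continuous_apply 2 _ 1).comp h1).mul ((PiLp.continuous_apply 2 _ 0).comp h2))
  have hint : ∀ a b : ℝ, IntervalIntegrable (fun s => pdet (γ s) (deriv γ s))
      MeasureTheory.volume a b := fun a b => hcont.intervalIntegrable a b
  have h13 := intervalIntegral.integral_add_adjacent_intervals (hint (s₁ t) (s₂ t))
    (hint (s₂ t) (s₃ t))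
  have h14 := intervalIntegral.integral_add_adjacent_intervals (hint (s₁ t) (s₃ t))
    (hint (s₃ t) (s₄ t))
  have h15 := intervalIntegral.integral_add_adjacent_intervals (hint (s₁ t) (s₄ t))
    (hint (s₄ t) (s₁ t + 1))
  -- coordinate equations from the parallelogram condition
  have hpar0 : γ (s₁ t) 0 + γ (s₃ t) 0 = γ (s₂ t) 0 + γ (s₄ t) 0 := by
    have := congrArg (fun v : EuclideanSpace ℝ (Fin 2) => v 0) (hpar t ht)
    simpa using this
  have hpar1 : γ (s₁ t) 1 + γ (s₃ t) 1 = γ (s₂ t) 1 + γ (s₄ t) 1 := by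
    have := congrArg (fun v : EuclideanSpace ℝ (Fin 2) => v 1) (hpar t ht)
    simpa using this
  -- perpendicularity in coordinates
  have hperp' : (γ (s₂ t) 0 - γ (s₁ t) 0) * (γ (s₄ t) 0 - γ (s₁ t) 0)
      + (γ (s₂ t) 1 - γ (s₁ t) 1) * (γ (s₄ t) 1 - γ (s₁ t) 1) = 0 := by
    have := hperp t ht
    simp [PiLp.inner_apply, RCLike.inner_apply, Fin.sum_univ_two] at this
    linarith
  have hccw' : (γ (s₂ t) 0 - γ (s₁ t) 0) * (γ (s₄ t) 1 - γ (s₁ t) 1)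
      - (γ (s₂ t) 1 - γ (s₁ t) 1) * (γ (s₄ t) 0 - γ (s₁ t) 0) > 0 := by
    have := hccw t ht
    simpa [pdet] using this
  -- γ(s₃) - γ(s₂) = γ(s₄) - γ(s₁)
  have hvec : γ (s₃ t) - γ (s₂ t) = γ (s₄ t) - γ (s₁ t) := by
    have h := hpar t ht
    rw [sub_eq_sub_iff_add_eq_add, add_comm (γ (s₃ t)), add_comm (γ (s₄ t)), h]
  -- the rectangle area in terms of pdet
  have hXY : X t * Y t = (γ (s₂ t) 0 - γ (s₁ t) 0) * (γ (s₄ t) 1 - γ (s₁ t) 1)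
      - (γ (s₂ t) 1 - γ (s₁ t) 1) * (γ (s₄ t) 0 - γ (s₁ t) 0) := by
    rw [hX, hY]
    simp only [hvec]
    rw [EuclideanSpace.norm_eq, EuclideanSpace.norm_eq]
    simp only [Fin.sum_univ_two, Real.norm_eq_abs, sq_abs]
    simpa using key_xy _ _ _ _ hperp' hccw'
  -- coordinate values of γ(s₃) in terms of the others
  have hr0 : γ (s₃ t) 0 = γ (s₂ t) 0 + γ (s₄ t) 0 - γ (s₁ t) 0 := by linarith
  have hr1 : γ (s₃ t) 1 = γ (s₂ t) 1 + γ (s₄ t) 1 - γ (s₁ t) 1 := by linarith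
  subst hA₁ hA₂ hA₃ hA₄
  simp only [hper (s₁ t)]
  rw [← h15, ← h14, ← h13]
  simp only [pdet] at *
  rw [hXY, hr0, hr1]
  ring
end
end

section
/- (Non-squeezing.) Suppose s₁, s₂, s₃, s₄ : [0,1] → ℝ are continuously differentiable and trace rectangles gracing γ on [0,1]; suppose there is a constant r > 0 with Y(t) = r·X(t) for all t ∈ [0,1] (constant aspect ratio); and suppose A₂(0) + A₄(0) = 0 and A₂(1) + A₄(1) = 0 (at the two ends, the second and fourth sides of the rectangle cut off regions of total signed area zero, as happens when these sides lie along straight portions of γ). Then X(1) = X(0) and Y(1) = Y(0); that is, the initial and final rectangles are congruent. -/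
noncomputable section

lemma hdw_coord {f : ℝ → EuclideanSpace ℝ (Fin 2)} {f' : EuclideanSpace ℝ (Fin 2)}
    {s : Set ℝ} {x : ℝ} (hf : HasDerivWithinAt f f' s x) (i : Fin 2) :
    HasDerivWithinAt (fun t => f t i) (f' i) s x := by
  have := (EuclideanSpace.proj i :
      EuclideanSpace ℝ (Fin 2) →L[ℝ] ℝ).hasFDerivAt.comp_hasDerivWithinAt x hf
  simp at this
  exact this

lemma hdw_pdet {f g : ℝ → EuclideanSpace ℝ (Fin 2)} {f' g' : EuclideanSpace ℝ (Fin 2)}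
    {s : Set ℝ} {x : ℝ} (hf : HasDerivWithinAt f f' s x) (hg : HasDerivWithinAt g g' s x) :
    HasDerivWithinAt (fun t => pdet (f t) (g t)) (pdet f' (g x) + pdet (f x) g') s x := by
  have h := ((hdw_coord hf 0).mul (hdw_coord hg 1)).sub ((hdw_coord hf 1).mul (hdw_coord hg 0))
  convert h using 1
  · rfl
  · rfl
  · rfl
  · simp only [pdet]; ring

lemma rect_rel {u v : EuclideanSpace ℝ (Fin 2)} {r : ℝ} (hr : 0 < r)
    (hperp : (inner ℝ u v : ℝ) = 0) (hccw : 0 < pdet u v) (hn : ‖v‖ = r * ‖u‖) :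
    v 0 = -(r * u 1) ∧ v 1 = r * u 0 := by
  have hi : u 0 * v 0 + u 1 * v 1 = 0 := by
    simp [PiLp.inner_apply, RCLike.inner_apply, Fin.sum_univ_two] at hperp
    linarith
  have hn2 : v 0 ^ 2 + v 1 ^ 2 = r ^ 2 * (u 0 ^ 2 + u 1 ^ 2) := by
    have h1 : ‖v‖ ^ 2 = r ^ 2 * ‖u‖ ^ 2 := by rw [hn]; ring
    have h2 : ‖v‖ ^ 2 = v 0 ^ 2 + v 1 ^ 2 := by
      rw [EuclideanSpace.norm_eq, Real.sq_sqrt (by positivity)]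
      simp [Fin.sum_univ_two, sq_abs]
    have h3 : ‖u‖ ^ 2 = u 0 ^ 2 + u 1 ^ 2 := by
      rw [EuclideanSpace.norm_eq, Real.sq_sqrt (by positivity)]
      simp [Fin.sum_univ_two, sq_abs]
    rw [h2, h3] at h1; linarith
  have hd : 0 < u 0 * v 1 - u 1 * v 0 := hccw
  have hD2 : (u 0 * v 1 - u 1 * v 0) ^ 2 = (r * (u 0 ^ 2 + u 1 ^ 2)) ^ 2 := by
    linear_combination (u 0 ^ 2 + u 1 ^ 2) * hn2 - (u 0 * v 0 + u 1 * v 1) * hi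
  have hDeq : u 0 * v 1 - u 1 * v 0 = r * (u 0 ^ 2 + u 1 ^ 2) := by
    have h2 : ((u 0 * v 1 - u 1 * v 0) - r * (u 0 ^ 2 + u 1 ^ 2)) *
        ((u 0 * v 1 - u 1 * v 0) + r * (u 0 ^ 2 + u 1 ^ 2)) = 0 := by linear_combination hD2
    rcases mul_eq_zero.1 h2 with h | h
    · linarith
    · have : 0 ≤ r * (u 0 ^ 2 + u 1 ^ 2) := by positivity
      linarith
  have key : (v 0 + r * u 1) ^ 2 + (v 1 - r * u 0) ^ 2 = 0 := by
    linear_combination hn2 - 2 * r * hDeq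
  constructor
  · nlinarith [sq_nonneg (v 0 + r * u 1), sq_nonneg (v 1 - r * u 0)]
  · nlinarith [sq_nonneg (v 0 + r * u 1), sq_nonneg (v 1 - r * u 0)]

/-- Non-squeezing: for a continuously differentiable path of rectangles
gracing `γ` with constant aspect ratio, if `A₂ + A₄` vanishes at both ends,
then the initial and final rectangles are congruent: `X 1 = X 0`, `Y 1 = Y 0`. -/
theorem stmt11
    (γ : ℝ → EuclideanSpace ℝ (Fin 2)) (hγ : ContDiff ℝ 1 γ)
    (hper : ∀ s : ℝ, γ (s + 1) = γ s)
    (s₁ s₂ s₃ s₄ : ℝ → ℝ)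
    (hc₁ : ContDiffOn ℝ 1 s₁ (Set.Icc (0:ℝ) 1)) (hc₂ : ContDiffOn ℝ 1 s₂ (Set.Icc (0:ℝ) 1))
    (hc₃ : ContDiffOn ℝ 1 s₃ (Set.Icc (0:ℝ) 1)) (hc₄ : ContDiffOn ℝ 1 s₄ (Set.Icc (0:ℝ) 1))
    (hpar : ∀ t ∈ Set.Icc (0:ℝ) 1, γ (s₁ t) + γ (s₃ t) = γ (s₂ t) + γ (s₄ t))
    (hperp : ∀ t ∈ Set.Icc (0:ℝ) 1, inner ℝ (γ (s₂ t) - γ (s₁ t)) (γ (s₄ t) - γ (s₁ t)) = (0 : ℝ))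
    (hccw : ∀ t ∈ Set.Icc (0:ℝ) 1, pdet (γ (s₂ t) - γ (s₁ t)) (γ (s₄ t) - γ (s₁ t)) > 0)
    (X Y : ℝ → ℝ)
    (hX : X = fun t => ‖γ (s₂ t) - γ (s₁ t)‖)
    (hY : Y = fun t => ‖γ (s₃ t) - γ (s₂ t)‖)
    (A₁ A₂ A₃ A₄ : ℝ → ℝ)
    (hA₁ : A₁ = fun t => (1/2) * (∫ s in (s₁ t)..(s₂ t), pdet (γ s) (deriv γ s))
        + (1/2) * pdet (γ (s₂ t)) (γ (s₁ t)))
    (hA₂ : A₂ = fun t => (1/2) * (∫ s in (s₂ t)..(s₃ t), pdet (γ s) (deriv γ s))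
        + (1/2) * pdet (γ (s₃ t)) (γ (s₂ t)))
    (hA₃ : A₃ = fun t => (1/2) * (∫ s in (s₃ t)..(s₄ t), pdet (γ s) (deriv γ s))
        + (1/2) * pdet (γ (s₄ t)) (γ (s₃ t)))
    (hA₄ : A₄ = fun t => (1/2) * (∫ s in (s₄ t)..(s₁ t + 1), pdet (γ s) (deriv γ s))
        + (1/2) * pdet (γ (s₁ t + 1)) (γ (s₄ t)))
    (A : ℝ → ℝ) (hA : A = fun t => (A₁ t + A₃ t) - (A₂ t + A₄ t))
    (r : ℝ) (hr : 0 < r) (hratio : ∀ t ∈ Set.Icc (0:ℝ) 1, Y t = r * X t)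
    (hend0 : A₂ 0 + A₄ 0 = 0) (hend1 : A₂ 1 + A₄ 1 = 0) :
    X 1 = X 0 ∧ Y 1 = Y 0 := by
  have hγc : Continuous γ := hγ.continuous
  have hγd : ∀ x, HasDerivAt γ (deriv γ x) x := fun x =>
    (hγ.differentiable one_ne_zero x).hasDerivAt
  have hdc : Continuous (deriv γ) := hγ.continuous_deriv le_rfl
  have hcoord : ∀ i : Fin 2, Continuous (fun v : EuclideanSpace ℝ (Fin 2) => v i) := fun i =>
    (EuclideanSpace.proj i : EuclideanSpace ℝ (Fin 2) →L[ℝ] ℝ).continuous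
  have hgc : Continuous (fun s => pdet (γ s) (deriv γ s)) := by
    unfold pdet
    exact (((hcoord 0).comp hγc).mul ((hcoord 1).comp hdc)).sub
      (((hcoord 1).comp hγc).mul ((hcoord 0).comp hdc))
  set G : ℝ → ℝ := fun x => ∫ s in (0:ℝ)..x, pdet (γ s) (deriv γ s) with hGdef
  have hGd : ∀ x, HasDerivAt G (pdet (γ x) (deriv γ x)) x := fun x =>
    intervalIntegral.integral_hasDerivAt_right (hgc.intervalIntegrable 0 x)
      (hgc.stronglyMeasurableAtFilter MeasureTheory.volume (nhds x)) hgc.continuousAt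
  have hsplit : ∀ a b : ℝ, (∫ s in a..b, pdet (γ s) (deriv γ s)) = G b - G a := by
    intro a b
    have h1 := intervalIntegral.integral_add_adjacent_intervals (μ := MeasureTheory.volume)
      (hgc.intervalIntegrable 0 a) (hgc.intervalIntegrable a b)
    simp only [hGdef]
    linarith
  have hdper : ∀ s, deriv γ (s + 1) = deriv γ s := by
    intro s
    have h1 : HasDerivAt (fun x => γ (x + 1)) ((1:ℝ) • deriv γ (s + 1)) s :=
      (hγd (s + 1)).scomp s ((hasDerivAt_id s).add_const 1)
    have h2 : (fun x => γ (x + 1)) = γ := funext hper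
    rw [h2, one_smul] at h1
    exact h1.deriv.symm
  have hu : UniqueDiffOn ℝ (Set.Icc (0:ℝ) 1) := uniqueDiffOn_Icc one_pos
  -- The conserved quantity
  set Φ : ℝ → ℝ := fun t =>
    (1/2) * (G (s₃ t) - G (s₂ t)) + (1/2) * pdet (γ (s₃ t)) (γ (s₂ t))
    + ((1/2) * (G (s₁ t + 1) - G (s₄ t)) + (1/2) * pdet (γ (s₁ t)) (γ (s₄ t)))
    + (r/2) * (inner ℝ (γ (s₂ t) - γ (s₁ t)) (γ (s₂ t) - γ (s₁ t)) : ℝ) with hΦdef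
  have hΦA : ∀ t, Φ t = A₂ t + A₄ t + (r/2) * ‖γ (s₂ t) - γ (s₁ t)‖ ^ 2 := by
    intro t
    simp only [hΦdef, hA₂, hA₄]
    rw [hsplit (s₂ t) (s₃ t), hsplit (s₄ t) (s₁ t + 1), hper (s₁ t)]
    rw [real_inner_self_eq_norm_sq]
  have key : ∀ t ∈ Set.Icc (0:ℝ) 1, HasDerivWithinAt Φ 0 (Set.Icc (0:ℝ) 1) t := by
    intro t ht
    obtain ⟨a₁, hd₁⟩ : ∃ a, HasDerivWithinAt s₁ a (Set.Icc (0:ℝ) 1) t :=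
      ⟨_, ((hc₁.differentiableOn one_ne_zero) t ht).hasDerivWithinAt⟩
    obtain ⟨a₂, hd₂⟩ : ∃ a, HasDerivWithinAt s₂ a (Set.Icc (0:ℝ) 1) t :=
      ⟨_, ((hc₂.differentiableOn one_ne_zero) t ht).hasDerivWithinAt⟩
    obtain ⟨a₃, hd₃⟩ : ∃ a, HasDerivWithinAt s₃ a (Set.Icc (0:ℝ) 1) t :=
      ⟨_, ((hc₃.differentiableOn one_ne_zero) t ht).hasDerivWithinAt⟩
    obtain ⟨a₄, hd₄⟩ : ∃ a, HasDerivWithinAt s₄ a (Set.Icc (0:ℝ) 1) t :=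
      ⟨_, ((hc₄.differentiableOn one_ne_zero) t ht).hasDerivWithinAt⟩
    have hp₁ : HasDerivWithinAt (fun u => γ (s₁ u)) (a₁ • deriv γ (s₁ t)) (Set.Icc (0:ℝ) 1) t :=
      (hγd (s₁ t)).scomp_hasDerivWithinAt t hd₁
    have hp₂ : HasDerivWithinAt (fun u => γ (s₂ u)) (a₂ • deriv γ (s₂ t)) (Set.Icc (0:ℝ) 1) t :=
      (hγd (s₂ t)).scomp_hasDerivWithinAt t hd₂
    have hp₃ : HasDerivWithinAt (fun u => γ (s₃ u)) (a₃ • deriv γ (s₃ t)) (Set.Icc (0:ℝ) 1) t :=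
      (hγd (s₃ t)).scomp_hasDerivWithinAt t hd₃
    have hp₄ : HasDerivWithinAt (fun u => γ (s₄ u)) (a₄ • deriv γ (s₄ t)) (Set.Icc (0:ℝ) 1) t :=
      (hγd (s₄ t)).scomp_hasDerivWithinAt t hd₄
    have hG₂ : HasDerivWithinAt (fun u => G (s₂ u))
        (a₂ • pdet (γ (s₂ t)) (deriv γ (s₂ t))) (Set.Icc (0:ℝ) 1) t :=
      (hGd (s₂ t)).scomp_hasDerivWithinAt t hd₂
    have hG₃ : HasDerivWithinAt (fun u => G (s₃ u))
        (a₃ • pdet (γ (s₃ t)) (deriv γ (s₃ t))) (Set.Icc (0:ℝ) 1) t :=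
      (hGd (s₃ t)).scomp_hasDerivWithinAt t hd₃
    have hG₄ : HasDerivWithinAt (fun u => G (s₄ u))
        (a₄ • pdet (γ (s₄ t)) (deriv γ (s₄ t))) (Set.Icc (0:ℝ) 1) t :=
      (hGd (s₄ t)).scomp_hasDerivWithinAt t hd₄
    have hG₁p : HasDerivWithinAt (fun u => G (s₁ u + 1))
        (a₁ • pdet (γ (s₁ t + 1)) (deriv γ (s₁ t + 1))) (Set.Icc (0:ℝ) 1) t :=
      by have := (hGd (s₁ t + 1)).scomp_hasDerivWithinAt t (hd₁.add_const (1:ℝ)); exact this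
    have h1 := (hG₃.sub hG₂).const_mul (1/2 : ℝ)
    have h2 := (hdw_pdet hp₃ hp₂).const_mul (1/2 : ℝ)
    have h3 := (hG₁p.sub hG₄).const_mul (1/2 : ℝ)
    have h4 := (hdw_pdet hp₁ hp₄).const_mul (1/2 : ℝ)
    have h5 := (HasDerivWithinAt.inner ℝ (hp₂.sub hp₁) (hp₂.sub hp₁)).const_mul (r/2 : ℝ)
    have hbig := ((h1.add h2).add (h3.add h4)).add h5
    -- the parallelogram relation and its derivative
    have hP₃eq : ∀ y ∈ Set.Icc (0:ℝ) 1, γ (s₃ y) = γ (s₂ y) + γ (s₄ y) - γ (s₁ y) := by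
      intro y hy
      rw [eq_sub_iff_add_eq]
      exact (add_comm _ _).trans (hpar y hy)
    have hp₃'' : HasDerivWithinAt (fun u => γ (s₃ u))
        (a₂ • deriv γ (s₂ t) + a₄ • deriv γ (s₄ t) - a₁ • deriv γ (s₁ t))
        (Set.Icc (0:ℝ) 1) t :=
      ((hp₂.add hp₄).sub hp₁).congr hP₃eq (hP₃eq t ht)
    have hE₃ : a₃ • deriv γ (s₃ t)
        = a₂ • deriv γ (s₂ t) + a₄ • deriv γ (s₄ t) - a₁ • deriv γ (s₁ t) :=
      (hp₃.derivWithin (hu t ht)).symm.trans (hp₃''.derivWithin (hu t ht))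
    -- the rectangle relation
    have hVn : ‖γ (s₄ t) - γ (s₁ t)‖ = r * ‖γ (s₂ t) - γ (s₁ t)‖ := by
      have h := hratio t ht
      simp only [hX, hY] at h
      have hVU : γ (s₃ t) - γ (s₂ t) = γ (s₄ t) - γ (s₁ t) := by
        rw [hP₃eq t ht]; abel
      rw [← hVU]
      exact h
    obtain ⟨hV0, hV1⟩ := rect_rel hr (hperp t ht) (hccw t ht) hVn
    -- coordinatewise facts
    have hc3 : ∀ i : Fin 2, γ (s₃ t) i = γ (s₂ t) i + γ (s₄ t) i - γ (s₁ t) i := by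
      intro i
      rw [hP₃eq t ht]
      simp [PiLp.add_apply, PiLp.sub_apply]
    have he3 : ∀ i : Fin 2, a₃ * deriv γ (s₃ t) i
        = a₂ * deriv γ (s₂ t) i + a₄ * deriv γ (s₄ t) i - a₁ * deriv γ (s₁ t) i := by
      intro i
      have h := congrArg (fun v : EuclideanSpace ℝ (Fin 2) => v i) hE₃
      simpa [PiLp.add_apply, PiLp.sub_apply, PiLp.smul_apply, smul_eq_mul] using h
    have h5' : γ (s₄ t) 0 - γ (s₁ t) 0 = -(r * (γ (s₂ t) 1 - γ (s₁ t) 1)) := by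
      simpa [PiLp.sub_apply] using hV0
    have h6' : γ (s₄ t) 1 - γ (s₁ t) 1 = r * (γ (s₂ t) 0 - γ (s₁ t) 0) := by
      simpa [PiLp.sub_apply] using hV1
    -- the derivative vanishes
    have hDzero : (1/2 : ℝ) * (a₃ • pdet (γ (s₃ t)) (deriv γ (s₃ t))
          - a₂ • pdet (γ (s₂ t)) (deriv γ (s₂ t)))
        + (1/2 : ℝ) * (pdet (a₃ • deriv γ (s₃ t)) (γ (s₂ t))
          + pdet (γ (s₃ t)) (a₂ • deriv γ (s₂ t)))
        + ((1/2 : ℝ) * (a₁ • pdet (γ (s₁ t + 1)) (deriv γ (s₁ t + 1))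
          - a₄ • pdet (γ (s₄ t)) (deriv γ (s₄ t)))
        + (1/2 : ℝ) * (pdet (a₁ • deriv γ (s₁ t)) (γ (s₄ t))
          + pdet (γ (s₁ t)) (a₄ • deriv γ (s₄ t))))
        + (r/2 : ℝ) * ((inner ℝ (γ (s₂ t) - γ (s₁ t)) (a₂ • deriv γ (s₂ t) - a₁ • deriv γ (s₁ t)) : ℝ)
          + (inner ℝ (a₂ • deriv γ (s₂ t) - a₁ • deriv γ (s₁ t)) (γ (s₂ t) - γ (s₁ t)) : ℝ)) = 0 := by
      rw [hper (s₁ t), hdper (s₁ t)]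
      simp only [pdet, PiLp.inner_apply, RCLike.inner_apply, conj_trivial, Fin.sum_univ_two,
        PiLp.sub_apply, PiLp.smul_apply, smul_eq_mul]
      linear_combination
        (a₂ * deriv γ (s₂ t) 1 - a₁ * deriv γ (s₁ t) 1) * h5'
        - (a₂ * deriv γ (s₂ t) 0 - a₁ * deriv γ (s₁ t) 0) * h6'
        + ((a₃ * deriv γ (s₃ t) 1 + a₂ * deriv γ (s₂ t) 1)/2) * hc3 0
        - ((a₃ * deriv γ (s₃ t) 0 + a₂ * deriv γ (s₂ t) 0)/2) * hc3 1
        + ((γ (s₁ t) 1 - γ (s₄ t) 1)/2) * he3 0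
        + ((γ (s₄ t) 0 - γ (s₁ t) 0)/2) * he3 1
    rw [hΦdef]
    exact hDzero ▸ hbig
  -- constancy
  have hΦ10 : Φ 1 = Φ 0 := by
    have hconst := constant_of_derivWithin_zero (f := Φ) (a := 0) (b := 1)
      (fun t ht => (key t ht).differentiableWithinAt)
      (fun t ht => (key t (Set.Ico_subset_Icc_self ht)).derivWithin
        (hu t (Set.Ico_subset_Icc_self ht)))
    exact hconst 1 (by norm_num)
  have hΦ1 : Φ 1 = (r/2) * ‖γ (s₂ 1) - γ (s₁ 1)‖ ^ 2 := by
    rw [hΦA 1]; linarith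
  have hΦ0 : Φ 0 = (r/2) * ‖γ (s₂ 0) - γ (s₁ 0)‖ ^ 2 := by
    rw [hΦA 0]; linarith
  have hsq : ‖γ (s₂ 1) - γ (s₁ 1)‖ ^ 2 = ‖γ (s₂ 0) - γ (s₁ 0)‖ ^ 2 := by
    have h := hΦ10
    rw [hΦ1, hΦ0] at h
    have hr2 : (r/2 : ℝ) ≠ 0 := by positivity
    exact mul_left_cancel₀ hr2 h
  have hXX : X 1 = X 0 := by
    simp only [hX]
    have ha := Real.sqrt_sq (norm_nonneg (γ (s₂ 1) - γ (s₁ 1)))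
    have hb := Real.sqrt_sq (norm_nonneg (γ (s₂ 0) - γ (s₁ 0)))
    rw [← ha, hsq, hb]
  refine ⟨hXX, ?_⟩
  have h1 := hratio 1 (by norm_num)
  have h0 := hratio 0 (by norm_num)
  rw [h1, h0, hXX]
end
end
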